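/- arXiv:0908.4025 — 3 statements merged into one kernel-verified Lean document; each statement's English description precedes it below -/
import Mathlib

section
/- For all n, m ≥ 1 there exists an invertible element δ of the monoid SB_{n+m}, which is a product of the generators σ_k^{±1} only, such that δ · (β ∗ α) = (α ∗ β) · δ for all α ∈ SB_n and β ∈ SB_m; that is, β ∗ α and α ∗ β are conjugate in SB_{n+m} by a single invertible braid independent of α and β. -/
open scoped TensorProduct DirectSum

set_option synthInstance.maxHeartbeats 1000000
set_option maxHeartbeats 2000000

namespace SingularHOMFLYPT

/-- Generators of the singular braid monoid on `n` strands: `pos i` is `σ_{i+1}`,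
`neg i` is `σ_{i+1}⁻¹` and `tau i` is `τ_{i+1}`, for `i : Fin (n-1)`. -/
inductive SBGen (n : ℕ) : Type
  | pos : Fin (n - 1) → SBGen n
  | neg : Fin (n - 1) → SBGen n
  | tau : Fin (n - 1) → SBGen n

open FreeMonoid in
/-- The defining relations of the singular braid monoid `SB_n` (Baez, Birman). -/
inductive SBRel (n : ℕ) : FreeMonoid (SBGen n) → FreeMonoid (SBGen n) → Prop
  | inv_right (i : Fin (n - 1)) : SBRel n (of (.pos i) * of (.neg i)) 1
  | inv_left (i : Fin (n - 1)) : SBRel n (of (.neg i) * of (.pos i)) 1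
  | sigma_tau (i : Fin (n - 1)) :
      SBRel n (of (.pos i) * of (.tau i)) (of (.tau i) * of (.pos i))
  | braid (i j : Fin (n - 1)) (h : (i : ℕ) + 1 = j ∨ (j : ℕ) + 1 = i) :
      SBRel n (of (.pos i) * of (.pos j) * of (.pos i))
        (of (.pos j) * of (.pos i) * of (.pos j))
  | braid_tau (i j : Fin (n - 1)) (h : (i : ℕ) + 1 = j ∨ (j : ℕ) + 1 = i) :
      SBRel n (of (.pos i) * of (.pos j) * of (.tau i))
        (of (.tau j) * of (.pos i) * of (.pos j))
  | comm_ss (i j : Fin (n - 1)) (h : (i : ℕ) + 2 ≤ j ∨ (j : ℕ) + 2 ≤ i) :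
      SBRel n (of (.pos i) * of (.pos j)) (of (.pos j) * of (.pos i))
  | comm_st (i j : Fin (n - 1)) (h : (i : ℕ) + 2 ≤ j ∨ (j : ℕ) + 2 ≤ i) :
      SBRel n (of (.pos i) * of (.tau j)) (of (.tau j) * of (.pos i))
  | comm_tt (i j : Fin (n - 1)) (h : (i : ℕ) + 2 ≤ j ∨ (j : ℕ) + 2 ≤ i) :
      SBRel n (of (.tau i) * of (.tau j)) (of (.tau j) * of (.tau i))

/-- The congruence on the free monoid generated by the singular braid relations. -/
def SBcon (n : ℕ) : Con (FreeMonoid (SBGen n)) := conGen (SBRel n)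

/-- The singular braid monoid on `n` strands, as a presented monoid. -/
abbrev SB (n : ℕ) : Type := (SBcon n).Quotient

/-- The canonical projection from the free monoid onto `SB n`. -/
def SB.mk {n : ℕ} : FreeMonoid (SBGen n) →* SB n := Con.mk' (SBcon n)

/-- The generator `σ_{i+1}` of `SB n`. -/
def sG {n : ℕ} (i : Fin (n - 1)) : SB n := SB.mk (.of (.pos i))

/-- The generator `σ_{i+1}⁻¹` of `SB n`. -/
def sInvG {n : ℕ} (i : Fin (n - 1)) : SB n := SB.mk (.of (.neg i))

/-- The generator `τ_{i+1}` of `SB n`. -/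
def tauG {n : ℕ} (i : Fin (n - 1)) : SB n := SB.mk (.of (.tau i))

theorem SB.sound {n : ℕ} {a b : FreeMonoid (SBGen n)} (h : SBRel n a b) :
    SB.mk a = SB.mk b :=
  Con.eq _ |>.2 (ConGen.Rel.of a b h)

/-- Lift a map on generators to a monoid homomorphism on `SB n`. -/
def SB.lift {n : ℕ} {M : Type*} [Monoid M] (f : SBGen n → M)
    (h : ∀ a b, SBRel n a b → FreeMonoid.lift f a = FreeMonoid.lift f b) :
    SB n →* M :=
  Con.lift _ (FreeMonoid.lift f)
    (Con.conGen_le.2 fun a b hab => (Con.ker_rel _).2 (h a b hab))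

@[simp] theorem SB.lift_mk {n : ℕ} {M : Type*} [Monoid M] (f : SBGen n → M)
    (h : ∀ a b, SBRel n a b → FreeMonoid.lift f a = FreeMonoid.lift f b)
    (w : FreeMonoid (SBGen n)) :
    SB.lift f h (SB.mk w) = FreeMonoid.lift f w :=
  Con.lift_coe _ w

/-- The number of singular points (`τ`-letters) of a generator. -/
def degGen {n : ℕ} : SBGen n → Multiplicative ℕ
  | .tau _ => Multiplicative.ofAdd 1
  | _ => 1

/-- The monoid homomorphism `deg : SB n →* (ℕ, +)` counting singular points. -/
def degM {n : ℕ} : SB n →* Multiplicative ℕ :=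
  SB.lift degGen (by
    rintro a b h
    cases h <;> simp [degGen, mul_comm])
/-- Shifting generators by `k`, viewing `SB n` inside `SB N` (strands `k+1, …, k+n`). -/
def shiftGen {n : ℕ} (N k : ℕ) (h : k + n ≤ N) : SBGen n → SBGen N
  | .pos i => .pos ⟨k + i, by have := i.2; omega⟩
  | .neg i => .neg ⟨k + i, by have := i.2; omega⟩
  | .tau i => .tau ⟨k + i, by have := i.2; omega⟩

theorem shiftGen_rel {n : ℕ} (N k : ℕ) (h : k + n ≤ N) {a b : FreeMonoid (SBGen n)}
    (hab : SBRel n a b) :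
    SBRel N (FreeMonoid.map (shiftGen N k h) a) (FreeMonoid.map (shiftGen N k h) b) := by
  cases hab <;>
    simp only [map_mul, map_one, FreeMonoid.map_of, shiftGen] <;>
    first
      | exact SBRel.inv_right _
      | exact SBRel.inv_left _
      | exact SBRel.sigma_tau _
      | (rename_i i j hij; exact SBRel.braid _ _ (by simp; omega))
      | (rename_i i j hij; first
          | exact SBRel.braid_tau _ _ (by simp; omega)
          | exact SBRel.comm_ss _ _ (by simp; omega)
          | exact SBRel.comm_st _ _ (by simp; omega)
          | exact SBRel.comm_tt _ _ (by simp; omega))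

/-- The monoid homomorphism `SB n →* SB N` placing a braid on the strands `k+1, …, k+n`. -/
def shiftHom {n : ℕ} (N k : ℕ) (h : k + n ≤ N) : SB n →* SB N :=
  Con.lift _ (SB.mk.comp (FreeMonoid.map (shiftGen N k h)))
    (Con.conGen_le.2 fun a b hab => (Con.ker_rel _).2 (SB.sound (shiftGen_rel N k h hab)))

/-- The natural inclusion `SB n →* SB N` (adding trivial strands on the right). -/
def inclSB {n : ℕ} (N : ℕ) (h : n ≤ N) : SB n →* SB N := shiftHom N 0 (by omega)

/-- `α ∗ β`: the braid obtained by placing `β` (on `m` strands) above (to the right of)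
`α` (on `n` strands), realized in `SB N` for `n + m ≤ N`. -/
def starIn {n m : ℕ} (N : ℕ) (h : n + m ≤ N) (α : SB n) (β : SB m) : SB N :=
  inclSB N (by omega) α * shiftHom N n h β
@[simp] theorem shiftHom_mk {n : ℕ} (N k : ℕ) (h : k + n ≤ N) (w : FreeMonoid (SBGen n)) :
    shiftHom N k h (SB.mk w) = SB.mk (FreeMonoid.map (shiftGen N k h) w) :=
  Con.lift_coe _ w

theorem shiftHom_sG {n : ℕ} (N k : ℕ) (h : k + n ≤ N) (i : Fin (n - 1)) :
    shiftHom N k h (sG i) = sG ⟨k + i.1, by have := i.2; omega⟩ := rfl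

theorem inclSB_sG {n : ℕ} (N : ℕ) (h : n ≤ N) (i : Fin (n - 1)) :
    inclSB N h (sG i) = sG ⟨0 + i.1, by have := i.2; omega⟩ := rfl

noncomputable section

/-- The field `ℂ(q)` of rational functions over `ℂ` in the variable `q`. -/
abbrev Kq : Type := RatFunc ℂ

/-- The field `ℂ(q,z) = ℂ(q)(z)` of rational functions over `ℂ` in the variables `q, z`. -/
abbrev Lqz : Type := RatFunc Kq

/-- The variable `q`, as an element of `ℂ(q)`. -/
def qK : Kq := RatFunc.X

/-- The variable `z`, as an element of `ℂ(q,z)`. -/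
def zL : Lqz := RatFunc.X

/-- The variable `q`, as an element of `ℂ(q,z)`. -/
def qL : Lqz := algebraMap Kq Lqz qK

/-- The Hecke relations `σ_k² = (q-1)σ_k + q` in the monoid algebra `ℂ(q)[SB_n]`. -/
def HeckeRel (n : ℕ) : MonoidAlgebra Kq (SB n) → MonoidAlgebra Kq (SB n) → Prop :=
  fun x y => ∃ i : Fin (n - 1),
    x = MonoidAlgebra.of Kq (SB n) (sG i) ^ 2 ∧
    y = (qK - 1) • MonoidAlgebra.of Kq (SB n) (sG i) + qK • 1

/-- The singular Hecke algebra `H(SB_n)`: the quotient of `ℂ(q)[SB_n]` by the two-sided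
ideal generated by the elements `σ_k² - (q-1)σ_k - q`. -/
abbrev Hecke (n : ℕ) : Type := RingQuot (HeckeRel n)

/-- The image of a singular braid in the singular Hecke algebra. -/
def heckeOf {n : ℕ} (β : SB n) : Hecke n :=
  RingQuot.mkAlgHom Kq (HeckeRel n) (MonoidAlgebra.of Kq (SB n) β)

/-- `H_z(SB_n) := ℂ(q,z) ⊗_{ℂ(q)} H(SB_n)`. -/
abbrev HeckeZ (n : ℕ) : Type := Lqz ⊗[Kq] Hecke n

/-- The image of a singular braid in `H_z(SB_n)`. -/
def ofHZ {n : ℕ} (β : SB n) : HeckeZ n := (1 : Lqz) ⊗ₜ[Kq] heckeOf β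

/-- The algebra homomorphism `H(SB_n) → H(SB_{n+1})` induced by the natural inclusion
`SB_n ↪ SB_{n+1}`. -/
def heckeIncl (n : ℕ) : Hecke n →ₐ[Kq] Hecke (n + 1) :=
  RingQuot.liftAlgHom Kq
    ⟨((RingQuot.mkAlgHom Kq (HeckeRel (n + 1))).comp
        (MonoidAlgebra.mapDomainAlgHom Kq Kq (inclSB (n + 1) (Nat.le_succ n)))),
      by
        rintro x y ⟨i, rfl, rfl⟩
        have hi := i.2
        set i' : Fin ((n + 1) - 1) := ⟨0 + i.1, by omega⟩ with hi'
        have hgen : (MonoidAlgebra.mapDomainAlgHom Kq Kq (inclSB (n + 1) (Nat.le_succ n)))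
            (MonoidAlgebra.of Kq (SB n) (sG i)) = MonoidAlgebra.of Kq (SB (n + 1)) (sG i') := by
          rw [MonoidAlgebra.of_apply, MonoidAlgebra.mapDomainAlgHom_apply,
            MonoidAlgebra.mapDomain_single, inclSB_sG, MonoidAlgebra.of_apply]
        have hrel : HeckeRel (n + 1) (MonoidAlgebra.of Kq (SB (n + 1)) (sG i') ^ 2)
            ((qK - 1) • MonoidAlgebra.of Kq (SB (n + 1)) (sG i') + qK • 1) := ⟨i', rfl, rfl⟩
        have hmk := RingQuot.mkAlgHom_rel Kq hrel
        simp only [map_pow, map_add, map_smul, map_one] at hmk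
        simp only [AlgHom.coe_comp, Function.comp_apply, map_pow, map_add, map_smul, map_one,
          hgen]
        exact hmk⟩

/-- The algebra homomorphism `ι_n : H_z(SB_n) → H_z(SB_{n+1})`. -/
def iotaHZ (n : ℕ) : HeckeZ n →ₐ[Lqz] HeckeZ (n + 1) :=
  Algebra.TensorProduct.map (AlgHom.id Lqz Lqz) (heckeIncl n)
/-- The `ℂ(q)`-subspace `H(S_dB_n)` of the singular Hecke algebra spanned by the images of
the singular braids with `d` singular points. -/
def HSd (n d : ℕ) : Submodule Kq (Hecke n) :=
  Submodule.span Kq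
    {x | ∃ β : SB n, degM β = Multiplicative.ofAdd d ∧ x = heckeOf β}

/-- The `ℂ(q,z)`-subspace `H_z(S_dB_n)` of `H_z(SB_n)` spanned by the images of the singular
braids with `d` singular points. -/
def HzSd (n d : ℕ) : Submodule Lqz (HeckeZ n) :=
  Submodule.span Lqz
    {x | ∃ β : SB n, degM β = Multiplicative.ofAdd d ∧ x = ofHZ β}

/-- Strand counts: the positive natural numbers. -/
abbrev Idx : Type := {n : ℕ // 0 < n}

/-- The direct sum `⊕_{n ≥ 1} H_z(SB_n)`. -/
abbrev MV : Type := ⨁ i : Idx, HeckeZ i.1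

instance instAddCommGroupHeckeZ (n : ℕ) : AddCommGroup (HeckeZ n) := inferInstance
instance instModuleHeckeZ (n : ℕ) : Module Lqz (HeckeZ n) := inferInstance
instance instAddCommGroupMV : AddCommGroup MV := inferInstance
instance instModuleMV : Module Lqz MV := inferInstance

/-- The canonical inclusion of the `n`-th summand of `⊕_{n ≥ 1} H_z(SB_n)`. -/
def mvof (i : Idx) : HeckeZ i.1 →ₗ[Lqz] MV :=
  DirectSum.lof Lqz Idx (fun i => HeckeZ i.1) i

/-- Successor of a strand count. -/
def succI (i : Idx) : Idx := ⟨i.1 + 1, Nat.succ_pos _⟩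

/-- The generator `σ_n` of `SB_{n+1}`. -/
def sigmaLast (i : Idx) : SB (i.1 + 1) := sG ⟨i.1 - 1, Nat.sub_lt i.2 one_pos⟩

/-- The Markov relations in `⊕_{n ≥ 1} H_z(SB_n)`: trace relations, stabilization relations
and positive Markov relations. -/
def markovRels : Set MV :=
  {x | ∃ (i : Idx) (a b : HeckeZ i.1), x = mvof i (a * b) - mvof i (b * a)} ∪
  {x | ∃ (i : Idx) (a : HeckeZ i.1), x = mvof i a - mvof (succI i) (iotaHZ i.1 a)} ∪
  {x | ∃ (i : Idx) (a : HeckeZ i.1),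
    x = mvof (succI i) (iotaHZ i.1 a * ofHZ (sigmaLast i)) - zL • mvof i a}

/-- The Markov module `Markov(⊔SB)`. -/
abbrev Markov : Type := MV ⧸ Submodule.span Lqz markovRels

instance instAddCommGroupMarkov : AddCommGroup Markov := inferInstance
instance instModuleMarkov : Module Lqz Markov := inferInstance

/-- The class `[a, m]` in the Markov module of an element `a ∈ H_z(SB_m)`. -/
def markovClass (m : ℕ) (hm : 0 < m) (a : HeckeZ m) : Markov :=
  Submodule.Quotient.mk (mvof ⟨m, hm⟩ a)

/-- The class `[β, m]` in the Markov module of a singular braid `β ∈ SB_m`. -/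
def braidClass (m : ℕ) (hm : 0 < m) (β : SB m) : Markov :=
  markovClass m hm (ofHZ β)

/-- The direct sum `⊕_{n ≥ 1} H_z(S_dB_n)`. -/
abbrev MVD (d : ℕ) : Type := ⨁ i : Idx, ↥(HzSd i.1 d)

instance instAddCommGroupMVD (d : ℕ) : AddCommGroup (MVD d) := inferInstance
instance instModuleMVD (d : ℕ) : Module Lqz (MVD d) := inferInstance

/-- The canonical inclusion of the `n`-th summand of `⊕_{n ≥ 1} H_z(S_dB_n)`. -/
def mvdof (d : ℕ) (i : Idx) : ↥(HzSd i.1 d) →ₗ[Lqz] MVD d :=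
  DirectSum.lof Lqz Idx (fun i => ↥(HzSd i.1 d)) i

/-- The Markov relations in `⊕_{n ≥ 1} H_z(S_dB_n)`. -/
def markovRelsD (d : ℕ) : Set (MVD d) :=
  {x | ∃ (i : Idx) (k l : ℕ), k + l = d ∧ ∃ (a b : HeckeZ i.1),
    a ∈ HzSd i.1 k ∧ b ∈ HzSd i.1 l ∧
    ∃ (hab : a * b ∈ HzSd i.1 d) (hba : b * a ∈ HzSd i.1 d),
      x = mvdof d i ⟨a * b, hab⟩ - mvdof d i ⟨b * a, hba⟩} ∪
  {x | ∃ (i : Idx) (a : HeckeZ i.1) (ha : a ∈ HzSd i.1 d)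
      (ha' : iotaHZ i.1 a ∈ HzSd (i.1 + 1) d),
    x = mvdof d i ⟨a, ha⟩ - mvdof d (succI i) ⟨iotaHZ i.1 a, ha'⟩} ∪
  {x | ∃ (i : Idx) (a : HeckeZ i.1) (ha : a ∈ HzSd i.1 d)
      (ha' : iotaHZ i.1 a * ofHZ (sigmaLast i) ∈ HzSd (i.1 + 1) d),
    x = mvdof d (succI i) ⟨iotaHZ i.1 a * ofHZ (sigmaLast i), ha'⟩ - zL • mvdof d i ⟨a, ha⟩}

/-- The `d`-th Markov module `Markov(⊔S_dB)`. -/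
abbrev MarkovD (d : ℕ) : Type := MVD d ⧸ Submodule.span Lqz (markovRelsD d)

instance instAddCommGroupMarkovD (d : ℕ) : AddCommGroup (MarkovD d) := inferInstance
instance instModuleMarkovD (d : ℕ) : Module Lqz (MarkovD d) := inferInstance

/-- The class `[β, m]` in the `d`-th Markov module of a singular braid `β ∈ S_dB_m`
(defined to be `0` if `β` does not have exactly `d` singular points). -/
def classD (d m : ℕ) (hm : 0 < m) (β : SB m) : MarkovD d :=
  if h : degM β = Multiplicative.ofAdd d then
    Submodule.Quotient.mk (mvdof d ⟨m, hm⟩ ⟨ofHZ β, Submodule.subset_span ⟨β, h, rfl⟩⟩)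
  else 0
/-- The singular braid `W_{d,k} = τ_1 τ_3 ⋯ τ_{2k-1} (τ_{2k+1}σ_{2k+1}) ⋯ (τ_{2d-1}σ_{2d-1})`
in `SB_{2d}` (for `1 ≤ d` and `k ≤ d`). -/
def W (d k : ℕ) : SB (2 * d) :=
  ((List.range d).map (fun j =>
    if h : 2 * j < 2 * d - 1 then
      (if j < k then tauG ⟨2 * j, h⟩ else tauG ⟨2 * j, h⟩ * sG ⟨2 * j, h⟩)
    else 1)).prod

/-- The class of `W_{d,k}` in the `d`-th Markov module: `[W_{d,k}, 2d]` for `d ≥ 1`, and the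
class `[W_{0,0}, 1]` of the trivial braid on one strand for `d = 0`. -/
def WclassD (d k : ℕ) : MarkovD d :=
  if hd : d = 0 then hd ▸ classD 0 1 one_pos 1
  else classD d (2 * d) (by omega) (W d k)

/-- The singular braid `α_0 τ_{i_1} α_1 τ_{i_2} ⋯ τ_{i_d} α_d`. -/
def sbWord {m d : ℕ} (α : Fin (d + 1) → SB m) (idx : Fin d → Fin (m - 1)) : SB m :=
  α 0 * ((List.ofFn fun j : Fin d => tauG (idx j) * α j.succ).prod)

/-- The singular braid `α_0 τ_{i_1} α_1 ⋯ τ_{i_{k-1}} α_{k-1} x α_k τ_{i_{k+1}} ⋯ τ_{i_d} α_d`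
obtained from `α_0 τ_{i_1} α_1 ⋯ τ_{i_d} α_d` by replacing the letter `τ_{i_k}` by `x`. -/
def sbWordRepl {m d : ℕ} (α : Fin (d + 1) → SB m) (idx : Fin d → Fin (m - 1))
    (k : Fin d) (x : SB m) : SB m :=
  α 0 * ((List.ofFn fun j : Fin d => (if j = k then x else tauG (idx j)) * α j.succ).prod)

/-- `RepGen false i = 1` (deleting a `τ` letter) and `RepGen true i = σ_{i+1}` (replacing a
`τ` letter by the corresponding `σ` letter). -/
def RepGen {m : ℕ} (ε : Bool) (i : Fin (m - 1)) : SB m := if ε then sG i else 1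

/-- `IsG d ε g` says that the linear map `g : Markov(⊔S_dB) → Markov(⊔S_{d-1}B)` is induced
by the family of maps `f_{n,ε}` (deletion of one `τ` letter for `ε = false`, replacement of one
`τ` letter by the corresponding `σ` letter for `ε = true`), i.e. that
`g([β,n]) = [f_{n,ε}(β), n]` for every singular braid `β ∈ S_dB_n`. -/
def IsG (d : ℕ) (ε : Bool) (g : MarkovD d →ₗ[Lqz] MarkovD (d - 1)) : Prop :=
  ∀ (m : ℕ) (hm : 0 < m) (α : Fin (d + 1) → SB m) (idx : Fin d → Fin (m - 1)),
    (∀ j, degM (α j) = Multiplicative.ofAdd 0) →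
    g (classD d m hm (sbWord α idx)) =
      ∑ k : Fin d, classD (d - 1) m hm (sbWordRepl α idx k (RepGen ε (idx k)))

/-- The `ℂ(q,z)`-vector space freely spanned by the set `S_dB_m` of singular braids on `m`
strands with `d` singular points. -/
abbrev FreeSd (m d : ℕ) : Type :=
  {β : SB m // degM β = Multiplicative.ofAdd d} →₀ Lqz

/-- The basis element of `ℂ(q,z)[S_dB_m]` corresponding to a braid `β ∈ S_dB_m` (defined to
be `0` if `β` does not have exactly `d` singular points). -/
def freeElem {m : ℕ} (d : ℕ) (β : SB m) : FreeSd m d :=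
  if h : degM β = Multiplicative.ofAdd d then Finsupp.single ⟨β, h⟩ 1 else 0

/-- Iterated product (power) with respect to a given bilinear multiplication. -/
def powAux (mul : Markov →ₗ[Lqz] Markov →ₗ[Lqz] Markov) (one x : Markov) : ℕ → Markov
  | 0 => one
  | k + 1 => mul x (powAux mul one x k)
section ConjLemmas

variable {N : ℕ}

theorem SB.mk_surjective {a : ℕ} : Function.Surjective (SB.mk (n := a)) :=
  fun x => Con.induction_on x fun w => ⟨w, rfl⟩

/-- The master induction lemma: a relation `d * f α = g α * d` holds for all `α`
as soon as it holds on generators. -/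
theorem conj_gen {a M : ℕ} (f g : SB a →* SB M) (d : SB M)
    (h : ∀ x : SBGen a, d * f (SB.mk (FreeMonoid.of x)) = g (SB.mk (FreeMonoid.of x)) * d)
    (α : SB a) : d * f α = g α * d := by
  obtain ⟨w, rfl⟩ := SB.mk_surjective α
  induction w using FreeMonoid.recOn with
  | one => simp
  | of_mul x w ihw =>
    simp only [map_mul]
    rw [← mul_assoc, h x, mul_assoc, ihw, ← mul_assoc]

/- ### Basic relations between the generators -/

theorem sG_sInvG (i : Fin (N - 1)) : sG i * sInvG i = 1 := by
  have hh := SB.sound (SBRel.inv_right i); simp only [map_mul, map_one] at hh; exact hh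

theorem sInvG_sG (i : Fin (N - 1)) : sInvG i * sG i = 1 := by
  have hh := SB.sound (SBRel.inv_left i); simp only [map_mul, map_one] at hh; exact hh

theorem isUnit_sG (i : Fin (N - 1)) : IsUnit (sG i) :=
  ⟨⟨sG i, sInvG i, sG_sInvG i, sInvG_sG i⟩, rfl⟩

theorem braidF (i j : Fin (N - 1)) (h : (i : ℕ) + 1 = j ∨ (j : ℕ) + 1 = i) :
    sG i * sG j * sG i = sG j * sG i * sG j := by
  have hh := SB.sound (SBRel.braid i j h); simp only [map_mul] at hh; exact hh

theorem braidTauF (i j : Fin (N - 1)) (h : (i : ℕ) + 1 = j ∨ (j : ℕ) + 1 = i) :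
    sG i * sG j * tauG i = tauG j * sG i * sG j := by
  have hh := SB.sound (SBRel.braid_tau i j h); simp only [map_mul] at hh; exact hh

theorem commSSF (i j : Fin (N - 1)) (h : (i : ℕ) + 2 ≤ j ∨ (j : ℕ) + 2 ≤ i) :
    sG i * sG j = sG j * sG i := by
  have hh := SB.sound (SBRel.comm_ss i j h); simp only [map_mul] at hh; exact hh

theorem commSTF (i j : Fin (N - 1)) (h : (i : ℕ) + 2 ≤ j ∨ (j : ℕ) + 2 ≤ i) :
    sG i * tauG j = tauG j * sG i := by
  have hh := SB.sound (SBRel.comm_st i j h); simp only [map_mul] at hh; exact hh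

theorem commTTF (i j : Fin (N - 1)) (h : (i : ℕ) + 2 ≤ j ∨ (j : ℕ) + 2 ≤ i) :
    tauG i * tauG j = tauG j * tauG i := by
  have hh := SB.sound (SBRel.comm_tt i j h); simp only [map_mul] at hh; exact hh

theorem braidNegF (i j : Fin (N - 1)) (h : (i : ℕ) + 1 = j ∨ (j : ℕ) + 1 = i) :
    sG i * sG j * sInvG i = sInvG j * sG i * sG j := by
  have hb := braidF i j h
  have h1 : sG j * (sG i * sG j * sInvG i) = sG j * (sInvG j * (sG i * sG j)) := by
    calc sG j * (sG i * sG j * sInvG i) = (sG j * sG i * sG j) * sInvG i := by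
          simp only [mul_assoc]
      _ = (sG i * sG j * sG i) * sInvG i := by rw [← hb]
      _ = sG i * sG j * (sG i * sInvG i) := by simp only [mul_assoc]
      _ = sG i * sG j := by rw [sG_sInvG, mul_one]
      _ = (sG j * sInvG j) * (sG i * sG j) := by rw [sG_sInvG, one_mul]
      _ = sG j * (sInvG j * (sG i * sG j)) := by simp only [mul_assoc]
  have h2 := (isUnit_sG j).mul_left_cancel h1
  calc sG i * sG j * sInvG i = sInvG j * (sG i * sG j) := h2
    _ = sInvG j * sG i * sG j := by simp only [mul_assoc]

/-- From `a * a' = a' * a = 1` and `a * x = x * a` deduce `a' * x = x * a'`. -/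
theorem comm_of_inv {a a' x : SB N} (h1 : a * a' = 1) (h2 : a' * a = 1)
    (hc : a * x = x * a) : a' * x = x * a' := by
  have h3 := congrArg (fun y => a' * y * a') hc
  simp only [← mul_assoc] at h3
  rw [h2, one_mul] at h3
  rw [mul_assoc (a' * x), h1, mul_one] at h3
  exact h3.symm

/- ### Generators indexed by natural numbers -/

/-- Tags for the three kinds of generators. -/
inductive GT : Type
  | gpos | gneg | gtau

/-- The generator of kind `t` at a `Fin` index. -/
def gennF (t : GT) (i : Fin (N - 1)) : SB N :=
  match t with
  | GT.gpos => sG i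
  | GT.gneg => sInvG i
  | GT.gtau => tauG i

theorem commPosF (u : GT) (i j : Fin (N - 1)) (h : (i : ℕ) + 2 ≤ j ∨ (j : ℕ) + 2 ≤ i) :
    sG i * gennF u j = gennF u j * sG i := by
  cases u with
  | gpos => exact commSSF i j h
  | gtau => exact commSTF i j h
  | gneg => exact (comm_of_inv (sG_sInvG j) (sInvG_sG j) (commSSF j i h.symm)).symm

theorem commF (t u : GT) (i j : Fin (N - 1)) (h : (i : ℕ) + 2 ≤ j ∨ (j : ℕ) + 2 ≤ i) :
    gennF t i * gennF u j = gennF u j * gennF t i := by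
  cases t with
  | gpos => exact commPosF u i j h
  | gneg => exact comm_of_inv (sG_sInvG i) (sInvG_sG i) (commPosF u i j h)
  | gtau =>
    cases u with
    | gpos => exact (commPosF GT.gtau j i h.symm).symm
    | gtau => exact commTTF i j h
    | gneg => exact (comm_of_inv (sG_sInvG j) (sInvG_sG j) (commPosF GT.gtau j i h.symm)).symm

theorem genAdjF (t : GT) (i j : Fin (N - 1)) (h : (i : ℕ) + 1 = j ∨ (j : ℕ) + 1 = i) :
    sG i * sG j * gennF t i = gennF t j * sG i * sG j := by
  cases t with
  | gpos => exact braidF i j h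
  | gneg => exact braidNegF i j h
  | gtau => exact braidTauF i j h

/-- `genn N t i` is the generator of kind `t` with (0-based) index `i : ℕ`, or `1` if
`i` is out of range. -/
def genn (N : ℕ) (t : GT) (i : ℕ) : SB N :=
  if h : i < N - 1 then gennF t ⟨i, h⟩ else 1

theorem genn_pos {i : ℕ} (h : i < N - 1) : genn N GT.gpos i = sG ⟨i, h⟩ := by
  simp [genn, h, gennF]

theorem genn_neg {i : ℕ} (h : i < N - 1) : genn N GT.gneg i = sInvG ⟨i, h⟩ := by
  simp [genn, h, gennF]

theorem genn_tau {i : ℕ} (h : i < N - 1) : genn N GT.gtau i = tauG ⟨i, h⟩ := by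
  simp [genn, h, gennF]

/-- Distant generators commute. -/
theorem genn_comm (t u : GT) {i j : ℕ} (h : i + 2 ≤ j ∨ j + 2 ≤ i) :
    genn N t i * genn N u j = genn N u j * genn N t i := by
  by_cases hi : i < N - 1
  · by_cases hj : j < N - 1
    · simp only [genn, dif_pos hi, dif_pos hj]
      exact commF t u ⟨i, hi⟩ ⟨j, hj⟩ h
    · simp [genn, hj]
  · simp [genn, hi]

/-- The local braid-type relation `σ_i σ_j g_i = g_j σ_i σ_j` for `|i-j| = 1`. -/
theorem genn_adj (t : GT) {i j : ℕ} (hij : i + 1 = j ∨ j + 1 = i)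
    (hi : i < N - 1) (hj : j < N - 1) :
    genn N GT.gpos i * genn N GT.gpos j * genn N t i =
      genn N t j * genn N GT.gpos i * genn N GT.gpos j := by
  simp only [genn, dif_pos hi, dif_pos hj]
  exact genAdjF t ⟨i, hi⟩ ⟨j, hj⟩ hij

end ConjLemmas

section ConjRows

variable {N : ℕ}

/-- Helper: left commutation under a continuation. -/
theorem mul_left_comm_of {a b : SB N} (h : a * b = b * a) (x : SB N) :
    a * (b * x) = b * (a * x) := by rw [← mul_assoc, h, mul_assoc]

/-- The ascending row `σ_p σ_{p+1} ⋯ σ_{p+len-1}`. -/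
def Arow (N p len : ℕ) : SB N :=
  ((List.range len).map fun t => genn N GT.gpos (p + t)).prod

theorem Arow_zero (p : ℕ) : Arow N p 0 = 1 := by simp [Arow]

theorem Arow_succ (p len : ℕ) :
    Arow N p (len + 1) = Arow N p len * genn N GT.gpos (p + len) := by
  simp [Arow, List.range_succ]

theorem Arow_split (p a b : ℕ) : Arow N p (a + b) = Arow N p a * Arow N (p + a) b := by
  induction b with
  | zero => simp [Arow]
  | succ b ih =>
    calc Arow N p (a + (b + 1)) = Arow N p (a + b) * genn N GT.gpos (p + (a + b)) :=
          Arow_succ p (a + b)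
      _ = Arow N p a * Arow N (p + a) b * genn N GT.gpos (p + a + b) := by
          rw [ih, Nat.add_assoc]
      _ = Arow N p a * (Arow N (p + a) b * genn N GT.gpos (p + a + b)) := mul_assoc _ _ _
      _ = Arow N p a * Arow N (p + a) (b + 1) := by rw [Arow_succ]

theorem Arow_two (k : ℕ) : Arow N k 2 = genn N GT.gpos k * genn N GT.gpos (k + 1) := by
  rw [show (2 : ℕ) = 1 + 1 from rfl, Arow_succ, show (1 : ℕ) = 0 + 1 from rfl, Arow_succ,
    Arow_zero, one_mul, Nat.add_zero]

/-- A generator at distance ≥ 2 from all letters of a row commutes with it. -/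
theorem row_comm (t : GT) {i p len : ℕ} (h : i + 2 ≤ p ∨ p + len + 1 ≤ i) :
    genn N t i * Arow N p len = Arow N p len * genn N t i := by
  induction len with
  | zero => simp [Arow]
  | succ l ih =>
    rw [Arow_succ, ← mul_assoc, ih (by omega), mul_assoc,
      genn_comm t GT.gpos (by omega), ← mul_assoc]

/-- A row shifts by one the generators strictly inside it. -/
theorem row_shift (t : GT) {p k len : ℕ} (hp : p ≤ k) (hk : k + 2 ≤ p + len)
    (hN : k + 1 < N - 1) :
    Arow N p len * genn N t k = genn N t (k + 1) * Arow N p len := by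
  have hsplit : len = (k - p) + (2 + (p + len - k - 2)) := by omega
  have e : p + (k - p) = k := by omega
  rw [hsplit, Arow_split, e, Arow_split, Arow_two]
  set P := Arow N p (k - p) with hP
  set Q := Arow N (k + 2) (p + len - k - 2) with hQ
  set g0 := genn N GT.gpos k
  set g1 := genn N GT.gpos (k + 1)
  set τ0 := genn N t k
  set τ1 := genn N t (k + 1)
  have cQ : τ0 * Q = Q * τ0 := row_comm t (Or.inl (by omega))
  have cP : P * τ1 = τ1 * P := (row_comm t (Or.inr (by omega))).symm
  have adj : g0 * g1 * τ0 = τ1 * g0 * g1 := genn_adj t (Or.inl rfl) (by omega) hN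
  have adj2 : g0 * (g1 * (τ0 * Q)) = τ1 * (g0 * (g1 * Q)) := by
    simp only [← mul_assoc]; rw [adj]
  calc P * (g0 * g1 * Q) * τ0 = P * (g0 * (g1 * (Q * τ0))) := by simp only [mul_assoc]
    _ = P * (g0 * (g1 * (τ0 * Q))) := by rw [← cQ]
    _ = P * (τ1 * (g0 * (g1 * Q))) := by rw [adj2]
    _ = τ1 * (P * (g0 * (g1 * Q))) := mul_left_comm_of cP _
    _ = τ1 * (P * (g0 * g1 * Q)) := by simp only [mul_assoc]

/-- The key two-row relation: two consecutive rows move a generator from the top of the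
block being crossed down to the bottom. -/
theorem two_row (t : GT) {k len : ℕ} (h : k + len < N - 1) :
    Arow N (k + 1) len * Arow N k len * genn N t (k + len) =
      genn N t k * (Arow N (k + 1) len * Arow N k len) := by
  induction len with
  | zero => simp [Arow]
  | succ l ih =>
    have e1 : k + 1 + l = k + l + 1 := by omega
    rw [Arow_succ, Arow_succ, e1, show k + (l + 1) = k + l + 1 from rfl]
    set A1 := Arow N (k + 1) l
    set A0 := Arow N k l
    set g1 := genn N GT.gpos (k + l + 1)
    set g0 := genn N GT.gpos (k + l)
    set τ1 := genn N t (k + l + 1)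
    set τ0 := genn N t (k + l)
    set τk := genn N t k
    have c : g1 * A0 = A0 * g1 := row_comm GT.gpos (Or.inr (by omega))
    have adj : g1 * g0 * τ1 = τ0 * g1 * g0 :=
      genn_adj t (Or.inr rfl) h (by omega)
    have adj2 : g1 * (g0 * (τ1 * (g1 * g0))) = τ0 * (g1 * (g0 * (g1 * g0))) := by
      simp only [← mul_assoc]; rw [adj]
    have ih' := ih (by omega)
    have ih2 : ∀ x : SB N, A1 * (A0 * (τ0 * x)) = τk * (A1 * (A0 * x)) := by
      intro x
      simp only [← mul_assoc]; rw [show A1 * A0 * τ0 = τk * (A1 * A0) from ih']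
      simp only [mul_assoc]
    calc A1 * g1 * (A0 * g0) * τ1
        = A1 * (g1 * (A0 * (g0 * τ1))) := by simp only [mul_assoc]
      _ = A1 * (A0 * (g1 * (g0 * τ1))) := by rw [mul_left_comm_of c]
      _ = A1 * (A0 * (τ0 * (g1 * g0))) := by
          have : g1 * (g0 * τ1) = τ0 * (g1 * g0) := by
            simp only [← mul_assoc]; rw [adj]
          rw [this]
      _ = τk * (A1 * (A0 * (g1 * g0))) := ih2 _
      _ = τk * (A1 * (g1 * (A0 * g0))) := by rw [mul_left_comm_of c.symm]
      _ = τk * (A1 * g1 * (A0 * g0)) := by simp only [mul_assoc]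

/-- The conjugating braid `Δ`, as a product of `r` rows of length `m`. -/
def Del (N m : ℕ) : ℕ → SB N
  | 0 => 1
  | r + 1 => Arow N r m * Del N m r

/-- Generators far above all rows commute with `Δ`. -/
theorem Del_comm_hi (t : GT) {m i r : ℕ} (h : r + m ≤ i) :
    genn N t i * Del N m r = Del N m r * genn N t i := by
  induction r with
  | zero => show genn N t i * 1 = 1 * genn N t i; rw [mul_one, one_mul]
  | succ r ih =>
    show genn N t i * (Arow N r m * Del N m r) = Arow N r m * Del N m r * genn N t i
    rw [← mul_assoc, row_comm t (Or.inr (by omega)), mul_assoc, ih (by omega), ← mul_assoc]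

/-- `Δ` shifts the generators of the bottom block up by the number of rows. -/
theorem Del_shift_up (t : GT) {m j : ℕ} (hj : j + 2 ≤ m) (r : ℕ) (h2 : j + r + 2 ≤ N) :
    Del N m r * genn N t j = genn N t (j + r) * Del N m r := by
  induction r with
  | zero => show 1 * genn N t j = genn N t (j + 0) * 1; rw [one_mul, mul_one]; rfl
  | succ r ih =>
    show Arow N r m * Del N m r * genn N t j =
      genn N t (j + r + 1) * (Arow N r m * Del N m r)
    calc Arow N r m * Del N m r * genn N t j
        = Arow N r m * (genn N t (j + r) * Del N m r) := by
          rw [mul_assoc, ih (by omega)]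
      _ = (Arow N r m * genn N t (j + r)) * Del N m r := by rw [mul_assoc]
      _ = (genn N t (j + r + 1) * Arow N r m) * Del N m r := by
          rw [row_shift t (by omega) (by omega) (by omega)]
      _ = genn N t (j + r + 1) * (Arow N r m * Del N m r) := by rw [mul_assoc]

/-- `Δ` shifts the generators of the top block down by `m`. -/
theorem Del_shift_down (t : GT) {m k : ℕ} (hN : k + m + 1 < N) (d : ℕ) :
    Del N m (k + 2 + d) * genn N t (m + k) = genn N t k * Del N m (k + 2 + d) := by
  have em : m + k = k + m := Nat.add_comm m k
  induction d with
  | zero =>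
    show Arow N (k + 1) m * (Arow N k m * Del N m k) * genn N t (m + k) =
      genn N t k * (Arow N (k + 1) m * (Arow N k m * Del N m k))
    rw [em]
    set A1 := Arow N (k + 1) m
    set A0 := Arow N k m
    set D := Del N m k
    set τ := genn N t (k + m)
    set τk := genn N t k
    have hd : τ * D = D * τ := Del_comm_hi t (by omega)
    have h2 : A1 * A0 * τ = τk * (A1 * A0) := two_row t (by omega)
    calc A1 * (A0 * D) * τ = A1 * (A0 * (D * τ)) := by simp only [mul_assoc]
      _ = A1 * (A0 * (τ * D)) := by rw [← hd]
      _ = τk * (A1 * (A0 * D)) := by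
          simp only [← mul_assoc]; rw [h2]; simp only [mul_assoc]
  | succ d ih =>
    show Arow N (k + 2 + d) m * Del N m (k + 2 + d) * genn N t (m + k) =
      genn N t k * (Arow N (k + 2 + d) m * Del N m (k + 2 + d))
    calc Arow N (k + 2 + d) m * Del N m (k + 2 + d) * genn N t (m + k)
        = Arow N (k + 2 + d) m * (genn N t k * Del N m (k + 2 + d)) := by
          rw [mul_assoc, ih]
      _ = (Arow N (k + 2 + d) m * genn N t k) * Del N m (k + 2 + d) := by rw [mul_assoc]
      _ = (genn N t k * Arow N (k + 2 + d) m) * Del N m (k + 2 + d) := by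
          rw [← row_comm t (Or.inl (by omega))]
      _ = genn N t k * (Arow N (k + 2 + d) m * Del N m (k + 2 + d)) := by rw [mul_assoc]

theorem Del_shift_down' (t : GT) {m k r : ℕ} (hk : k + 2 ≤ r) (hN : k + m + 1 < N) :
    Del N m r * genn N t (m + k) = genn N t k * Del N m r := by
  obtain ⟨d, rfl⟩ : ∃ d, r = k + 2 + d := ⟨r - (k + 2), by omega⟩
  exact Del_shift_down t hN d

/- ### Membership and invertibility -/

theorem genn_pos_mem {i : ℕ} :
    genn N GT.gpos i ∈ Submonoid.closure {x : SB N | ∃ j, x = sG j ∨ x = sInvG j} := by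
  by_cases h : i < N - 1
  · rw [genn_pos h]; exact Submonoid.subset_closure ⟨⟨i, h⟩, Or.inl rfl⟩
  · simp only [genn, dif_neg h]; exact one_mem _

theorem genn_pos_isUnit {i : ℕ} : IsUnit (genn N GT.gpos i) := by
  by_cases h : i < N - 1
  · rw [genn_pos h]; exact isUnit_sG _
  · simp only [genn, dif_neg h]; exact isUnit_one

theorem Arow_mem {p len : ℕ} :
    Arow N p len ∈ Submonoid.closure {x : SB N | ∃ j, x = sG j ∨ x = sInvG j} := by
  induction len with
  | zero => rw [Arow_zero]; exact one_mem _
  | succ l ih => rw [Arow_succ]; exact mul_mem ih genn_pos_mem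

theorem Arow_isUnit {p len : ℕ} : IsUnit (Arow N p len) := by
  induction len with
  | zero => rw [Arow_zero]; exact isUnit_one
  | succ l ih => rw [Arow_succ]; exact ih.mul genn_pos_isUnit

theorem Del_mem {m r : ℕ} :
    Del N m r ∈ Submonoid.closure {x : SB N | ∃ j, x = sG j ∨ x = sInvG j} := by
  induction r with
  | zero => exact one_mem _
  | succ r ih => exact mul_mem Arow_mem ih

theorem Del_isUnit {m r : ℕ} : IsUnit (Del N m r) := by
  induction r with
  | zero => exact isUnit_one
  | succ r ih => exact Arow_isUnit.mul ih

end ConjRows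

section ConjFinal

variable {N : ℕ}

/-- The kind tag of a generator letter. -/
def gt {a : ℕ} : SBGen a → GT
  | .pos _ => GT.gpos
  | .neg _ => GT.gneg
  | .tau _ => GT.gtau

/-- The index of a generator letter. -/
def gidx {a : ℕ} : SBGen a → ℕ
  | .pos i => i
  | .neg i => i
  | .tau i => i

theorem gidx_lt {a : ℕ} (x : SBGen a) : gidx x < a - 1 := by
  cases x <;> exact Fin.is_lt _

theorem shift_gen_eq {a : ℕ} (k : ℕ) (h : k + a ≤ N) (x : SBGen a)
    (hk : k + gidx x < N - 1) :
    shiftHom N k h (SB.mk (FreeMonoid.of x)) = genn N (gt x) (k + gidx x) := by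
  cases x with
  | pos i => exact (genn_pos hk).symm
  | neg i => exact (genn_neg hk).symm
  | tau i => exact (genn_tau hk).symm

theorem incl_gen_eq {a : ℕ} (h : a ≤ N) (x : SBGen a) (hk : 0 + gidx x < N - 1) :
    inclSB N h (SB.mk (FreeMonoid.of x)) = genn N (gt x) (0 + gidx x) :=
  shift_gen_eq 0 (by omega) x hk

end ConjFinal

/-- For all `n, m ≥ 1` there exists an invertible element `δ` of the monoid `SB_{n+m}`, a
product of the generators `σ_k^{±1}` only, such that `δ·(β ∗ α) = (α ∗ β)·δ` for all
`α ∈ SB_n` and `β ∈ SB_m`. -/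
theorem exists_conjugating_braid (n m : ℕ) (hn : 0 < n) (hm : 0 < m) :
    ∃ δ : SB (n + m), IsUnit δ ∧
      δ ∈ Submonoid.closure {x : SB (n + m) | ∃ i, x = sG i ∨ x = sInvG i} ∧
      ∀ (α : SB n) (β : SB m),
        δ * starIn (n + m) (by omega) β α = starIn (n + m) le_rfl α β * δ := by
  have pfa : m + n ≤ n + m := by omega
  have pfb : n ≤ n + m := by omega
  have pfc : m ≤ n + m := by omega
  have pfd : n + m ≤ n + m := le_rfl
  refine ⟨Del (n + m) m n, Del_isUnit, Del_mem, ?_⟩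
  intro α β
  show Del (n + m) m n * (inclSB (n + m) pfc β * shiftHom (n + m) m pfa α) =
      inclSB (n + m) pfb α * shiftHom (n + m) n pfd β * Del (n + m) m n
  have hA : Del (n + m) m n * shiftHom (n + m) m pfa α =
      inclSB (n + m) pfb α * Del (n + m) m n := by
    refine conj_gen _ _ _ (fun x => ?_) α
    have hg := gidx_lt x
    rw [shift_gen_eq m pfa x (by omega), incl_gen_eq pfb x (by omega), Nat.zero_add]
    exact Del_shift_down' (gt x) (by omega) (by omega)
  have hB : Del (n + m) m n * inclSB (n + m) pfc β =
      shiftHom (n + m) n pfd β * Del (n + m) m n := by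
    refine conj_gen _ _ _ (fun y => ?_) β
    have hg := gidx_lt y
    rw [incl_gen_eq pfc y (by omega), shift_gen_eq n pfd y (by omega), Nat.zero_add,
      Nat.add_comm n (gidx y)]
    exact Del_shift_up (gt y) (by omega) n (by omega)
  have hgenC : ∀ (x : SBGen n) (y : SBGen m),
      inclSB (n + m) pfb (SB.mk (FreeMonoid.of x)) *
        shiftHom (n + m) n pfd (SB.mk (FreeMonoid.of y)) =
      shiftHom (n + m) n pfd (SB.mk (FreeMonoid.of y)) *
        inclSB (n + m) pfb (SB.mk (FreeMonoid.of x)) := by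
    intro x y
    have hx := gidx_lt x
    have hy := gidx_lt y
    rw [incl_gen_eq pfb x (by omega), shift_gen_eq n pfd y (by omega), Nat.zero_add]
    exact genn_comm (gt x) (gt y) (Or.inl (by omega))
  have hC : inclSB (n + m) pfb α * shiftHom (n + m) n pfd β =
      shiftHom (n + m) n pfd β * inclSB (n + m) pfb α := by
    refine conj_gen _ _ _ (fun y => ?_) β
    exact (conj_gen _ _ _ (fun x => (hgenC x y).symm) α).symm
  calc Del (n + m) m n * (inclSB (n + m) pfc β * shiftHom (n + m) m pfa α)
      = (Del (n + m) m n * inclSB (n + m) pfc β) * shiftHom (n + m) m pfa α := by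
        rw [mul_assoc]
    _ = shiftHom (n + m) n pfd β * (Del (n + m) m n * shiftHom (n + m) m pfa α) := by
        rw [hB, mul_assoc]
    _ = shiftHom (n + m) n pfd β * (inclSB (n + m) pfb α * Del (n + m) m n) := by
        rw [hA]
    _ = (shiftHom (n + m) n pfd β * inclSB (n + m) pfb α) * Del (n + m) m n := by
        rw [mul_assoc]
    _ = inclSB (n + m) pfb α * shiftHom (n + m) n pfd β * Del (n + m) m n := by
        rw [← hC]

end
end SingularHOMFLYPT
end

section
/- For each d ≥ 0, the inclusions H_z(S_dB_n) ⊆ H_z(SB_n) induce a well-defined ℂ(q,z)-linear map j_d : Markov(⊔S_dB) → Markov(⊔SB), and the resulting map ⊕_{d≥0} Markov(⊔S_dB) → Markov(⊔SB) is an isomorphism of ℂ(q,z)-vector spaces; that is, Markov(⊔SB) = ⊕_{d≥0} Markov(⊔S_dB). -/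
open scoped TensorProduct DirectSum

set_option synthInstance.maxHeartbeats 1000000
set_option maxHeartbeats 2000000

namespace SingularHOMFLYPT

noncomputable section

-- ===================== auxiliary development =====================

theorem SB.hom_ext {n : ℕ} {M : Type*} [Monoid M] {f g : SB n →* M}
    (h : ∀ x : SBGen n, f (SB.mk (.of x)) = g (SB.mk (.of x))) : f = g := by
  have h1 : f.comp SB.mk = g.comp SB.mk := FreeMonoid.hom_eq h
  refine MonoidHom.ext fun β => ?_
  obtain ⟨w, rfl⟩ := Con.mk'_surjective β
  exact DFunLike.congr_fun h1 w

/-- `heckeOf` as a monoid homomorphism. -/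
def heckeOfM (n : ℕ) : SB n →* Hecke n where
  toFun := heckeOf
  map_one' := by
    show RingQuot.mkAlgHom Kq (HeckeRel n) (MonoidAlgebra.of Kq (SB n) 1) = 1
    rw [map_one, map_one]
  map_mul' a b := by
    show RingQuot.mkAlgHom Kq (HeckeRel n) (MonoidAlgebra.of Kq (SB n) (a * b)) = _
    rw [map_mul, map_mul]; rfl

theorem heckeOf_mul {n : ℕ} (a b : SB n) :
    heckeOf (a * b) = heckeOf a * heckeOf b := (heckeOfM n).map_mul a b

theorem ofHZ_one {n : ℕ} : ofHZ (1 : SB n) = 1 := by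
  rw [ofHZ, show heckeOf (1 : SB n) = 1 from (heckeOfM n).map_one,
    Algebra.TensorProduct.one_def]

theorem ofHZ_mul {n : ℕ} (a b : SB n) : ofHZ (a * b) = ofHZ a * ofHZ b := by
  simp [ofHZ, heckeOf_mul, Algebra.TensorProduct.tmul_mul_tmul]

theorem degM_mk_of {n : ℕ} (g : SBGen n) : degM (SB.mk (FreeMonoid.of g)) = degGen g := by
  simp [degM, SB.lift_mk]

theorem degM_sG {n : ℕ} (i : Fin (n - 1)) : degM (sG i) = 1 := degM_mk_of _

theorem degM_inclSB {n N : ℕ} (h : n ≤ N) (β : SB n) :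
    degM (inclSB N h β) = degM β := by
  have : (degM.comp (inclSB N h) : SB n →* Multiplicative ℕ) = degM := by
    apply SB.hom_ext
    intro x
    show degM (inclSB N h (SB.mk (.of x))) = degM (SB.mk (.of x))
    rw [degM_mk_of]
    cases x <;> rfl
  exact DFunLike.congr_fun this β

theorem heckeIncl_heckeOf {n : ℕ} (β : SB n) :
    heckeIncl n (heckeOf β) = heckeOf (inclSB (n + 1) (Nat.le_succ n) β) := by
  unfold heckeIncl heckeOf
  rw [RingQuot.liftAlgHom_mkAlgHom_apply]
  simp [MonoidAlgebra.of_apply, Finsupp.mapDomain_single]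

theorem iotaHZ_ofHZ {n : ℕ} (β : SB n) :
    iotaHZ n (ofHZ β) = ofHZ (inclSB (n + 1) (Nat.le_succ n) β) := by
  simp [iotaHZ, ofHZ, Algebra.TensorProduct.map_tmul, heckeIncl_heckeOf]

theorem span_heckeOf_top {n : ℕ} :
    Submodule.span Kq (Set.range (heckeOf (n := n))) = ⊤ := by
  rw [Submodule.eq_top_iff']
  intro x
  obtain ⟨y, rfl⟩ := RingQuot.mkAlgHom_surjective Kq (HeckeRel n) x
  induction y using MonoidAlgebra.induction_linear with
  | zero => rw [map_zero]; exact Submodule.zero_mem _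
  | add f g hf hg => rw [map_add]; exact Submodule.add_mem _ hf hg
  | single b k =>
      have hbk : (MonoidAlgebra.single b k : MonoidAlgebra Kq (SB n))
          = k • MonoidAlgebra.of Kq (SB n) b := by
        rw [MonoidAlgebra.of_apply, MonoidAlgebra.smul_single', mul_one]
      rw [hbk, map_smul]
      exact Submodule.smul_mem _ _ (Submodule.subset_span ⟨b, rfl⟩)

theorem span_ofHZ_top {n : ℕ} :
    Submodule.span Lqz (Set.range (ofHZ (n := n))) = ⊤ := by
  rw [Submodule.eq_top_iff']
  intro x
  induction x using TensorProduct.induction_on with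
  | zero => exact Submodule.zero_mem _
  | add x y hx hy => exact Submodule.add_mem _ hx hy
  | tmul c h =>
      have hc : c ⊗ₜ[Kq] h = c • ((1 : Lqz) ⊗ₜ[Kq] h) := by
        rw [TensorProduct.smul_tmul', smul_eq_mul, mul_one]
      rw [hc]
      clear hc
      refine Submodule.smul_mem _ _ ?_
      have hh : h ∈ Submodule.span Kq (Set.range (heckeOf (n := n))) := by
        rw [span_heckeOf_top]; trivial
      induction hh using Submodule.span_induction with
      | mem x hx =>
          obtain ⟨β, rfl⟩ := hx
          exact Submodule.subset_span ⟨β, rfl⟩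
      | zero => rw [TensorProduct.tmul_zero]; exact Submodule.zero_mem _
      | add x y hx hy hx' hy' =>
          rw [TensorProduct.tmul_add]; exact Submodule.add_mem _ hx' hy'
      | smul k x hx hx' =>
          rw [TensorProduct.tmul_smul, ← algebraMap_smul Lqz k]
          exact Submodule.smul_mem _ _ hx'
theorem heckeOf_sq {n : ℕ} (i : Fin (n - 1)) :
    heckeOf (sG i) ^ 2 = (qK - 1) • heckeOf (sG i) + qK • 1 := by
  have hrel : HeckeRel n (MonoidAlgebra.of Kq (SB n) (sG i) ^ 2)
      ((qK - 1) • MonoidAlgebra.of Kq (SB n) (sG i) + qK • 1) := ⟨i, rfl, rfl⟩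
  have h := RingQuot.mkAlgHom_rel Kq hrel
  rw [map_add, map_smul, map_smul, map_one, map_pow] at h
  exact h

theorem ofHZ_sq {n : ℕ} (i : Fin (n - 1)) :
    ofHZ (sG i) ^ 2 = (qK - 1) • ofHZ (sG i) + qK • (1 : HeckeZ n) := by
  have h := heckeOf_sq i
  have h1 : ofHZ (sG i) ^ 2 = (1 : Lqz) ⊗ₜ[Kq] (heckeOf (sG i) ^ 2) := by
    rw [ofHZ, pow_two, pow_two, Algebra.TensorProduct.tmul_mul_tmul, mul_one]
  rw [h1, h, TensorProduct.tmul_add, TensorProduct.tmul_smul, TensorProduct.tmul_smul]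
  rw [ofHZ, Algebra.TensorProduct.one_def]

/-- The monoid homomorphism `β ↦ t^{deg β} ⊗ β` into the monoid algebra. -/
def thetaHom (n : ℕ) : SB n →* MonoidAlgebra (HeckeZ n) (Multiplicative ℕ) where
  toFun β := MonoidAlgebra.single (degM β) (ofHZ β)
  map_one' := by
    show MonoidAlgebra.single (degM 1) (ofHZ 1) = 1
    rw [map_one, ofHZ_one, MonoidAlgebra.one_def]
  map_mul' a b := by
    show MonoidAlgebra.single (degM (a * b)) (ofHZ (a * b)) =
      MonoidAlgebra.single (degM a) (ofHZ a) * MonoidAlgebra.single (degM b) (ofHZ b)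
    rw [map_mul, ofHZ_mul, ← MonoidAlgebra.single_mul_single]

/-- Lift of `thetaHom` to the monoid algebra. -/
def phiZ0 (n : ℕ) : MonoidAlgebra Kq (SB n) →ₐ[Kq] MonoidAlgebra (HeckeZ n) (Multiplicative ℕ) :=
  MonoidAlgebra.lift Kq _ (SB n) (thetaHom n)

theorem phiZ0_of {n : ℕ} (β : SB n) :
    phiZ0 n (MonoidAlgebra.of Kq (SB n) β) = MonoidAlgebra.single (degM β) (ofHZ β) := by
  rw [phiZ0, MonoidAlgebra.lift_of]; rfl

/-- The grading homomorphism on the Hecke algebra. -/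
def gHecke (n : ℕ) : Hecke n →ₐ[Kq] MonoidAlgebra (HeckeZ n) (Multiplicative ℕ) :=
  RingQuot.liftAlgHom Kq ⟨phiZ0 n, by
    rintro x y ⟨i, rfl, rfl⟩
    simp only [map_pow, map_add, map_smul, map_one, phiZ0_of]
    rw [degM_sG, pow_two, MonoidAlgebra.single_mul_single, one_mul, ← pow_two, ofHZ_sq i,
      MonoidAlgebra.one_def, MonoidAlgebra.smul_single, MonoidAlgebra.smul_single, ← MonoidAlgebra.single_add]⟩

theorem gHecke_heckeOf {n : ℕ} (β : SB n) :
    gHecke n (heckeOf β) = MonoidAlgebra.single (degM β) (ofHZ β) := by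
  rw [gHecke, heckeOf, RingQuot.liftAlgHom_mkAlgHom_apply, phiZ0_of]

/-- The grading homomorphism on `H_z(SB_n)`. -/
def PhiZ (n : ℕ) : HeckeZ n →ₐ[Lqz] MonoidAlgebra (HeckeZ n) (Multiplicative ℕ) :=
  Algebra.TensorProduct.lift (Algebra.ofId Lqz _) (gHecke n)
    (fun a b => by
      rw [Algebra.ofId_apply]
      exact Algebra.commutes a (gHecke n b))

theorem PhiZ_ofHZ {n : ℕ} (β : SB n) :
    PhiZ n (ofHZ β) = MonoidAlgebra.single (degM β) (ofHZ β) := by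
  rw [PhiZ, ofHZ, Algebra.TensorProduct.lift_tmul, map_one, one_mul, gHecke_heckeOf]
  rfl
/-- From finitely supported functions to the direct sum. -/
def toDS (n : ℕ) : MonoidAlgebra (HeckeZ n) (Multiplicative ℕ) →ₗ[Lqz] ⨁ _ : ℕ, HeckeZ n :=
  (Finsupp.lsum ℕ fun a => DirectSum.lof Lqz ℕ (fun _ => HeckeZ n) (Multiplicative.toAdd a)) ∘ₗ
    (MonoidAlgebra.coeffLinearEquiv Lqz).toLinearMap

/-- The degree decomposition of `H_z(SB_n)`. -/
def decompHZ (n : ℕ) : HeckeZ n →ₗ[Lqz] ⨁ _ : ℕ, HeckeZ n where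
  toFun x := toDS n (PhiZ n x)
  map_add' x y := by
    show toDS n (PhiZ n (x + y)) = toDS n (PhiZ n x) + toDS n (PhiZ n y)
    rw [map_add, map_add]
  map_smul' c x := by
    show toDS n (PhiZ n (c • x)) = c • toDS n (PhiZ n x)
    rw [map_smul, map_smul]

theorem decompHZ_ofHZ {n : ℕ} (β : SB n) :
    decompHZ n (ofHZ β) =
      DirectSum.lof Lqz ℕ (fun _ => HeckeZ n) (Multiplicative.toAdd (degM β)) (ofHZ β) := by
  show toDS n (PhiZ n (ofHZ β)) = _
  rw [PhiZ_ofHZ]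
  exact Finsupp.lsum_single ℕ _ _ _

theorem ofHZ_mem_HzSd {n : ℕ} {β : SB n} {d : ℕ} (h : degM β = Multiplicative.ofAdd d) :
    ofHZ β ∈ HzSd n d := Submodule.subset_span ⟨β, h, rfl⟩

theorem decompHZ_mem {n : ℕ} {e : ℕ} {x : HeckeZ n} (hx : x ∈ HzSd n e) :
    decompHZ n x = DirectSum.lof Lqz ℕ (fun _ => HeckeZ n) e x := by
  induction hx using Submodule.span_induction with
  | mem x hx =>
      obtain ⟨β, hβ, rfl⟩ := hx
      rw [decompHZ_ofHZ, hβ]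
      rfl
  | zero => rw [map_zero, map_zero]
  | add x y hx hy hx' hy' => rw [map_add, map_add, hx', hy']
  | smul c x hx hx' => rw [map_smul, map_smul, hx']

/-- The degree-`d` projection of `H_z(SB_n)`. -/
def pZmap (n d : ℕ) : HeckeZ n →ₗ[Lqz] HeckeZ n :=
  (DFinsupp.lapply d) ∘ₗ decompHZ n

theorem pZmap_of_mem {n d : ℕ} {x : HeckeZ n} (hx : x ∈ HzSd n d) : pZmap n d x = x := by
  rw [pZmap, LinearMap.comp_apply, decompHZ_mem hx]
  show ((DirectSum.lof Lqz ℕ (fun _ => HeckeZ n) d) x) d = x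
  exact DirectSum.lof_apply (M := fun _ => HeckeZ n) Lqz d x

theorem pZmap_mem_HzSd (n d : ℕ) (x : HeckeZ n) : pZmap n d x ∈ HzSd n d := by
  have hx : x ∈ Submodule.span Lqz (Set.range (ofHZ (n := n))) := by
    rw [span_ofHZ_top]; trivial
  induction hx using Submodule.span_induction with
  | mem x hx =>
      obtain ⟨β, rfl⟩ := hx
      rw [pZmap, LinearMap.comp_apply, decompHZ_ofHZ]
      show ((DirectSum.lof Lqz ℕ (fun _ => HeckeZ n)
        (Multiplicative.toAdd (degM β))) (ofHZ β)) d ∈ HzSd n d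
      by_cases h : Multiplicative.toAdd (degM β) = d
      · rw [h, DirectSum.lof_apply]
        exact ofHZ_mem_HzSd (by rw [← h]; rfl)
      · rw [show ((DirectSum.lof Lqz ℕ (fun _ => HeckeZ n)
            (Multiplicative.toAdd (degM β))) (ofHZ β)) d = 0
            from DFinsupp.single_eq_of_ne (Ne.symm h)]
        exact Submodule.zero_mem _
  | zero => rw [map_zero]; exact Submodule.zero_mem _
  | add x y hx hy hx' hy' => rw [map_add]; exact Submodule.add_mem _ hx' hy'
  | smul c x hx hx' => rw [map_smul]; exact Submodule.smul_mem _ _ hx'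
/-- Degree-`d` component map into the `d`-th Markov module. -/
def cMap (i : Idx) (d : ℕ) : HeckeZ i.1 →ₗ[Lqz] MarkovD d :=
  (Submodule.mkQ _) ∘ₗ (mvdof d i) ∘ₗ
    (LinearMap.codRestrict (HzSd i.1 d) (pZmap i.1 d) (pZmap_mem_HzSd i.1 d))

/-- The total degree decomposition map into `⊕_d Markov(⊔S_dB)`. -/
def GmapD (i : Idx) : HeckeZ i.1 →ₗ[Lqz] ⨁ d : ℕ, MarkovD d :=
  (DirectSum.toModule Lqz ℕ _ fun d =>
    (DirectSum.lof Lqz ℕ (fun d => MarkovD d) d) ∘ₗ cMap i d) ∘ₗ decompHZ i.1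

theorem GmapD_mem {i : Idx} {e : ℕ} {x : HeckeZ i.1} (hx : x ∈ HzSd i.1 e) :
    GmapD i x = DirectSum.lof Lqz ℕ (fun d => MarkovD d) e
      (Submodule.Quotient.mk (mvdof e i ⟨x, hx⟩)) := by
  rw [GmapD, LinearMap.comp_apply, decompHZ_mem hx, DirectSum.toModule_lof,
    LinearMap.comp_apply]
  congr 1
  have hcr : LinearMap.codRestrict (HzSd i.1 e) (pZmap i.1 e) (pZmap_mem_HzSd i.1 e) x
      = ⟨x, hx⟩ := Subtype.ext (pZmap_of_mem hx)
  rw [cMap, LinearMap.comp_apply, LinearMap.comp_apply, hcr]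
  rfl

theorem markovD_mk_eq {d : ℕ} {X Y : MVD d} (h : X - Y ∈ markovRelsD d) :
    (Submodule.Quotient.mk X : MarkovD d) = Submodule.Quotient.mk Y :=
  (Submodule.Quotient.eq _).2 (Submodule.subset_span h)

theorem markov_mk_eq {X Y : MV} (h : X - Y ∈ markovRels) :
    (Submodule.Quotient.mk X : Markov) = Submodule.Quotient.mk Y :=
  (Submodule.Quotient.eq _).2 (Submodule.subset_span h)

theorem T1 (i : Idx) : ∀ a b : HeckeZ i.1, GmapD i (a * b) = GmapD i (b * a) := by
  have key : ∀ β γ : SB i.1, GmapD i (ofHZ β * ofHZ γ) = GmapD i (ofHZ γ * ofHZ β) := by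
    intro β γ
    set k := Multiplicative.toAdd (degM β) with hk
    set l := Multiplicative.toAdd (degM γ) with hl
    have hβ : degM β = Multiplicative.ofAdd k := rfl
    have hγ : degM γ = Multiplicative.ofAdd l := rfl
    have hmul : degM (β * γ) = Multiplicative.ofAdd (k + l) := by
      rw [map_mul, hβ, hγ]; rfl
    have hmul' : degM (γ * β) = Multiplicative.ofAdd (k + l) := by
      rw [map_mul, hβ, hγ, Nat.add_comm k l]; rfl
    have h1 : ofHZ β * ofHZ γ ∈ HzSd i.1 (k + l) := by
      rw [← ofHZ_mul]; exact ofHZ_mem_HzSd hmul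
    have h2 : ofHZ γ * ofHZ β ∈ HzSd i.1 (k + l) := by
      rw [← ofHZ_mul]; exact ofHZ_mem_HzSd hmul'
    rw [GmapD_mem h1, GmapD_mem h2]
    congr 1
    exact markovD_mk_eq (Or.inl (Or.inl
      ⟨i, k, l, rfl, ofHZ β, ofHZ γ, ofHZ_mem_HzSd hβ, ofHZ_mem_HzSd hγ, h1, h2, rfl⟩))
  have step1 : ∀ (β : SB i.1) (b : HeckeZ i.1),
      GmapD i (ofHZ β * b) = GmapD i (b * ofHZ β) := by
    intro β
    have h := LinearMap.ext_on (R := Lqz) (span_ofHZ_top (n := i.1))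
      (f := (GmapD i) ∘ₗ LinearMap.mulLeft Lqz (ofHZ β))
      (g := (GmapD i) ∘ₗ LinearMap.mulRight Lqz (ofHZ β))
      (by rintro x ⟨γ, rfl⟩; exact key β γ)
    exact fun b => LinearMap.congr_fun h b
  intro a b
  have h := LinearMap.ext_on (R := Lqz) (span_ofHZ_top (n := i.1))
    (f := (GmapD i) ∘ₗ LinearMap.mulRight Lqz b)
    (g := (GmapD i) ∘ₗ LinearMap.mulLeft Lqz b)
    (by rintro x ⟨β, rfl⟩; exact step1 β b)
  exact LinearMap.congr_fun h a

theorem T2 (i : Idx) : ∀ a : HeckeZ i.1, GmapD i a = GmapD (succI i) (iotaHZ i.1 a) := by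
  have h := LinearMap.ext_on (R := Lqz) (span_ofHZ_top (n := i.1))
    (f := GmapD i)
    (g := (GmapD (succI i)) ∘ₗ (iotaHZ i.1).toLinearMap)
    ?_
  · exact fun a => LinearMap.congr_fun h a
  rintro x ⟨β, rfl⟩
  set k := Multiplicative.toAdd (degM β) with hk
  have hβ : degM β = Multiplicative.ofAdd k := rfl
  have h1 : ofHZ β ∈ HzSd i.1 k := ofHZ_mem_HzSd hβ
  have hι : iotaHZ i.1 (ofHZ β) = ofHZ (inclSB (i.1 + 1) (Nat.le_succ i.1) β) :=
    iotaHZ_ofHZ β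
  have h2 : iotaHZ i.1 (ofHZ β) ∈ HzSd (succI i).1 k := by
    rw [hι]; exact ofHZ_mem_HzSd ((degM_inclSB _ β).trans hβ)
  show GmapD i (ofHZ β) = GmapD (succI i) (iotaHZ i.1 (ofHZ β))
  rw [GmapD_mem h1, GmapD_mem h2]
  congr 1
  exact markovD_mk_eq (Or.inl (Or.inr ⟨i, ofHZ β, h1, h2, rfl⟩))

theorem T3 (i : Idx) : ∀ a : HeckeZ i.1,
    GmapD (succI i) (iotaHZ i.1 a * ofHZ (sigmaLast i)) = zL • GmapD i a := by
  have h := LinearMap.ext_on (R := Lqz) (span_ofHZ_top (n := i.1))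
    (f := (GmapD (succI i)) ∘ₗ (LinearMap.mulRight Lqz (ofHZ (sigmaLast i))) ∘ₗ
      (iotaHZ i.1).toLinearMap)
    (g := zL • GmapD i)
    ?_
  · exact fun a => LinearMap.congr_fun h a
  rintro x ⟨β, rfl⟩
  set k := Multiplicative.toAdd (degM β) with hk
  have hβ : degM β = Multiplicative.ofAdd k := rfl
  have h1 : ofHZ β ∈ HzSd i.1 k := ofHZ_mem_HzSd hβ
  have hι : iotaHZ i.1 (ofHZ β) = ofHZ (inclSB (i.1 + 1) (Nat.le_succ i.1) β) :=
    iotaHZ_ofHZ β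
  have hdeg : degM (inclSB (i.1 + 1) (Nat.le_succ i.1) β * sigmaLast i)
      = Multiplicative.ofAdd k := by
    rw [map_mul, (degM_inclSB (Nat.le_succ i.1) β), hβ, sigmaLast, degM_sG, mul_one]
  have h2 : iotaHZ i.1 (ofHZ β) * ofHZ (sigmaLast i) ∈ HzSd (succI i).1 k := by
    rw [hι, ← ofHZ_mul]; exact ofHZ_mem_HzSd hdeg
  show GmapD (succI i) (iotaHZ i.1 (ofHZ β) * ofHZ (sigmaLast i)) = zL • GmapD i (ofHZ β)
  rw [GmapD_mem h1, GmapD_mem h2]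
  rw [show (Submodule.Quotient.mk (mvdof k (succI i) ⟨iotaHZ i.1 (ofHZ β) *
      ofHZ (sigmaLast i), h2⟩) : MarkovD k)
      = zL • Submodule.Quotient.mk (mvdof k i ⟨ofHZ β, h1⟩) from by
    rw [← Submodule.Quotient.mk_smul]
    exact markovD_mk_eq (Or.inr ⟨i, ofHZ β, h1, h2, rfl⟩)]
  rw [map_smul]
/-- The decomposition map on `⊕_n H_z(SB_n)`. -/
def g0 : MV →ₗ[Lqz] ⨁ d : ℕ, MarkovD d :=
  DirectSum.toModule Lqz Idx _ fun i => GmapD i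

theorem g0_mvof (i : Idx) (a : HeckeZ i.1) : g0 (mvof i a) = GmapD i a := by
  unfold g0 mvof
  exact DirectSum.toModule_lof (N := ⨁ d : ℕ, MarkovD d) (φ := fun i => GmapD i) Lqz i a

theorem g0_killed : Submodule.span Lqz markovRels ≤ LinearMap.ker g0 := by
  rw [Submodule.span_le]
  rintro x ((⟨i, a, b, rfl⟩ | ⟨i, a, rfl⟩) | ⟨i, a, rfl⟩) <;>
    simp only [SetLike.mem_coe, LinearMap.mem_ker, map_sub, map_smul, g0_mvof]
  · rw [sub_eq_zero]; exact T1 i a b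
  · rw [sub_eq_zero]; exact (T2 i a).trans (g0_mvof _ _).symm
  · rw [sub_eq_zero]; exact (g0_mvof _ _).trans (T3 i a)

/-- The inverse map `Markov(⊔SB) → ⊕_d Markov(⊔S_dB)`. -/
def gbar : Markov →ₗ[Lqz] ⨁ d : ℕ, MarkovD d :=
  Submodule.liftQ _ g0 g0_killed

/-- The `d`-th inclusion map before taking the quotient. -/
def Jmap (d : ℕ) : MVD d →ₗ[Lqz] Markov :=
  DirectSum.toModule Lqz Idx Markov fun i =>
    (Submodule.mkQ _) ∘ₗ (mvof i) ∘ₗ (HzSd i.1 d).subtype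

theorem Jmap_mvdof (d : ℕ) (i : Idx) (x : ↥(HzSd i.1 d)) :
    Jmap d (mvdof d i x) = Submodule.Quotient.mk (mvof i (x : HeckeZ i.1)) := by
  unfold Jmap mvdof
  exact DirectSum.toModule_lof (N := Markov)
    (φ := fun i => (Submodule.mkQ _) ∘ₗ (mvof i) ∘ₗ (HzSd i.1 d).subtype) Lqz i x

theorem relsD_killed (d : ℕ) :
    Submodule.span Lqz (markovRelsD d) ≤ LinearMap.ker (Jmap d) := by
  rw [Submodule.span_le]
  rintro x ((⟨i, k, l, hkl, a, b, ha, hb, hab, hba, rfl⟩ | ⟨i, a, ha, ha', rfl⟩)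
    | ⟨i, a, ha, ha', rfl⟩) <;>
    simp only [SetLike.mem_coe, LinearMap.mem_ker, map_sub, map_smul, Jmap_mvdof] <;>
    rw [sub_eq_zero]
  · exact markov_mk_eq (Or.inl (Or.inl ⟨i, a, b, rfl⟩))
  · exact markov_mk_eq (Or.inl (Or.inr ⟨i, a, rfl⟩))
  · rw [← Submodule.Quotient.mk_smul]
    exact markov_mk_eq (Or.inr ⟨i, a, rfl⟩)

/-- The induced map `j_d : Markov(⊔S_dB) → Markov(⊔SB)`. -/
def jD (d : ℕ) : MarkovD d →ₗ[Lqz] Markov :=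
  Submodule.liftQ _ (Jmap d) (relsD_killed d)

theorem jD_mk (d : ℕ) (i : Idx) (x : ↥(HzSd i.1 d)) :
    jD d (Submodule.Quotient.mk (mvdof d i x)) =
      Submodule.Quotient.mk (mvof i (x : HeckeZ i.1)) := by
  rw [jD, Submodule.liftQ_apply, Jmap_mvdof]

theorem toModule_jD_GmapD (i : Idx) {e : ℕ} {x : HeckeZ i.1} (hx : x ∈ HzSd i.1 e) :
    DirectSum.toModule Lqz ℕ Markov jD (GmapD i x) =
      Submodule.Quotient.mk (mvof i x) := by
  rw [GmapD_mem hx]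
  have h2 : DirectSum.toModule Lqz ℕ Markov jD
      ((DirectSum.lof Lqz ℕ (fun d => MarkovD d) e)
        (Submodule.Quotient.mk (mvdof e i ⟨x, hx⟩)))
      = jD e (Submodule.Quotient.mk (mvdof e i ⟨x, hx⟩)) :=
    DirectSum.toModule_lof Lqz e _
  rw [h2, jD_mk]

theorem comp_one : gbar ∘ₗ DirectSum.toModule Lqz ℕ Markov jD = LinearMap.id := by
  refine DirectSum.linearMap_ext Lqz fun d => ?_
  refine Submodule.linearMap_qext _ ?_
  refine DirectSum.linearMap_ext Lqz fun i => ?_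
  ext x
  simp only [LinearMap.comp_apply, LinearMap.id_apply]
  have h1 : (Submodule.span Lqz (markovRelsD d)).mkQ
      ((DirectSum.lof Lqz Idx (fun i => ↥(HzSd i.1 d)) i) x)
      = Submodule.Quotient.mk (mvdof d i x) := rfl
  rw [h1]
  have h2 : DirectSum.toModule Lqz ℕ Markov jD
      ((DirectSum.lof Lqz ℕ (fun d => MarkovD d) d) (Submodule.Quotient.mk (mvdof d i x)))
      = jD d (Submodule.Quotient.mk (mvdof d i x)) := DirectSum.toModule_lof Lqz d _
  rw [h2, jD_mk, gbar, Submodule.liftQ_apply, g0_mvof, GmapD_mem x.2]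

theorem comp_two : (DirectSum.toModule Lqz ℕ Markov jD) ∘ₗ gbar = LinearMap.id := by
  refine Submodule.linearMap_qext _ ?_
  have hg : gbar ∘ₗ (Submodule.span Lqz markovRels).mkQ = g0 :=
    Submodule.liftQ_mkQ _ g0 g0_killed
  rw [LinearMap.comp_assoc, hg]
  refine DirectSum.linearMap_ext Lqz fun i => ?_
  refine LinearMap.ext_on (R := Lqz) (span_ofHZ_top (n := i.1)) ?_
  rintro x ⟨β, rfl⟩
  simp only [LinearMap.comp_apply, LinearMap.id_apply]
  have h0 : (DirectSum.lof Lqz Idx (fun i => HeckeZ i.1) i) (ofHZ β) = mvof i (ofHZ β) := rfl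
  rw [h0, g0_mvof]
  exact toModule_jD_GmapD i (ofHZ_mem_HzSd (d := Multiplicative.toAdd (degM β)) rfl)
/-- For each `d ≥ 0` the inclusions `H_z(S_dB_n) ⊆ H_z(SB_n)` induce a well-defined
`ℂ(q,z)`-linear map `j_d : Markov(⊔S_dB) → Markov(⊔SB)`, and the resulting map
`⊕_{d ≥ 0} Markov(⊔S_dB) → Markov(⊔SB)` is an isomorphism of `ℂ(q,z)`-vector spaces. -/
theorem markov_module_graded :
    ∃ j : ∀ d : ℕ, MarkovD d →ₗ[Lqz] Markov,
      (∀ (d : ℕ) (i : Idx) (x : ↥(HzSd i.1 d)),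
        j d (Submodule.Quotient.mk (mvdof d i x)) =
          Submodule.Quotient.mk (mvof i (x : HeckeZ i.1))) ∧
      Function.Bijective (DirectSum.toModule Lqz ℕ Markov j) := by
  refine ⟨jD, jD_mk, ?_⟩
  refine Function.bijective_iff_has_inverse.2 ⟨gbar, ?_, ?_⟩
  · intro x
    exact LinearMap.congr_fun comp_one x
  · intro x
    exact LinearMap.congr_fun comp_two x

end
end SingularHOMFLYPT
end

section
/- For every n ≥ 2 and d ≥ 1 there is a unique ℂ(q,z)-linear map f_{n,1} : ℂ(q,z)[S_dB_n] → ℂ(q,z)[S_{d−1}B_n] such that for every β ∈ S_dB_n and every expression β = α_0 τ_{i_1} α_1 τ_{i_2} ⋯ τ_{i_d} α_d with α_0,…,α_d ∈ B_n and 1 ≤ i_1,…,i_d ≤ n−1, one has f_{n,1}(β) = Σ_{k=1}^{d} α_0 τ_{i_1} α_1 ⋯ τ_{i_{k−1}} α_{k−1} σ_{i_k} α_k τ_{i_{k+1}} α_{k+1} ⋯ τ_{i_d} α_d (the letter τ_{i_k} replaced by σ_{i_k}). In particular, this sum does not depend on the chosen expression of β, and every β ∈ S_dB_n admits such an expression.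 -/
open scoped TensorProduct DirectSum

set_option synthInstance.maxHeartbeats 1000000
set_option maxHeartbeats 2000000

namespace SingularHOMFLYPT

noncomputable section

namespace F1Aux

variable {m : ℕ}

/-- The "triangular" monoid used to define the derivation. -/
@[ext] structure Tri (m : ℕ) : Type where
  fst : SB m
  snd : MonoidAlgebra Lqz (SB m)

instance : Monoid (Tri m) where
  mul p q := ⟨p.fst * q.fst,
    p.snd * MonoidAlgebra.of Lqz (SB m) q.fst + MonoidAlgebra.of Lqz (SB m) p.fst * q.snd⟩
  one := ⟨1, 0⟩
  mul_assoc p q r := by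
    refine Tri.ext (mul_assoc _ _ _) ?_
    show (p.snd * MonoidAlgebra.of Lqz (SB m) q.fst + MonoidAlgebra.of Lqz (SB m) p.fst * q.snd)
          * MonoidAlgebra.of Lqz (SB m) r.fst
        + MonoidAlgebra.of Lqz (SB m) (p.fst * q.fst) * r.snd
      = p.snd * MonoidAlgebra.of Lqz (SB m) (q.fst * r.fst)
        + MonoidAlgebra.of Lqz (SB m) p.fst
          * (q.snd * MonoidAlgebra.of Lqz (SB m) r.fst + MonoidAlgebra.of Lqz (SB m) q.fst * r.snd)
    simp only [map_mul, add_mul, mul_add, mul_assoc, add_assoc]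
  one_mul p := by
    refine Tri.ext (one_mul _) ?_
    show (0 : MonoidAlgebra Lqz (SB m)) * MonoidAlgebra.of Lqz (SB m) p.fst
        + MonoidAlgebra.of Lqz (SB m) 1 * p.snd = p.snd
    rw [map_one, zero_mul, one_mul, zero_add]
  mul_one p := by
    refine Tri.ext (mul_one _) ?_
    show p.snd * MonoidAlgebra.of Lqz (SB m) 1
        + MonoidAlgebra.of Lqz (SB m) p.fst * (0 : MonoidAlgebra Lqz (SB m)) = p.snd
    rw [map_one, mul_one, mul_zero, add_zero]

@[simp] theorem tri_mul_fst (p q : Tri m) : (p * q).fst = p.fst * q.fst := rfl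
@[simp] theorem tri_mul_snd (p q : Tri m) :
    (p * q).snd = p.snd * MonoidAlgebra.of Lqz (SB m) q.fst
      + MonoidAlgebra.of Lqz (SB m) p.fst * q.snd := rfl
@[simp] theorem tri_one_fst : (1 : Tri m).fst = 1 := rfl
@[simp] theorem tri_one_snd : (1 : Tri m).snd = 0 := rfl

/-- Images of the generators in the triangular monoid. -/
def genD : SBGen m → Tri m
  | .pos i => ⟨sG i, 0⟩
  | .neg i => ⟨sInvG i, 0⟩
  | .tau i => ⟨tauG i, MonoidAlgebra.of Lqz (SB m) (sG i)⟩

theorem mk_of_mul (x : SBGen m) (w : FreeMonoid (SBGen m)) :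
    SB.mk (FreeMonoid.of x * w) = SB.mk (FreeMonoid.of x) * SB.mk w := map_mul _ _ _

/-- The derivation monoid morphism. -/
def DerHom : SB m →* Tri m :=
  SB.lift genD (by
    rintro a b h
    cases h with
    | inv_right i =>
        have h1 : sG (n := m) i * sInvG i = 1 := by
          have := SB.sound (SBRel.inv_right i)
          simpa [sG, sInvG, map_mul] using this
        refine Tri.ext ?_ ?_ <;>
          simp [map_mul, FreeMonoid.lift_eval_of, genD, h1]
    | inv_left i =>
        have h1 : sInvG (n := m) i * sG i = 1 := by
          have := SB.sound (SBRel.inv_left i)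
          simpa [sG, sInvG, map_mul] using this
        refine Tri.ext ?_ ?_ <;>
          simp [map_mul, FreeMonoid.lift_eval_of, genD, h1]
    | sigma_tau i =>
        have h1 : sG (n := m) i * tauG i = tauG i * sG i := by
          have := SB.sound (SBRel.sigma_tau i)
          simpa [sG, tauG, map_mul] using this
        refine Tri.ext ?_ ?_ <;>
          simp [map_mul, FreeMonoid.lift_eval_of, genD, h1, mul_comm]
    | braid i j hij =>
        have h1 : sG (n := m) i * sG j * sG i = sG j * sG i * sG j := by
          have := SB.sound (SBRel.braid i j hij)
          simpa [sG, map_mul] using this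
        refine Tri.ext ?_ ?_ <;>
          simp [map_mul, FreeMonoid.lift_eval_of, genD, h1]
    | braid_tau i j hij =>
        have h1 : sG (n := m) i * sG j * tauG i = tauG j * sG i * sG j := by
          have := SB.sound (SBRel.braid_tau i j hij)
          simpa [sG, tauG, map_mul] using this
        have h2 : sG (n := m) i * sG j * sG i = sG j * sG i * sG j := by
          have := SB.sound (SBRel.braid i j hij)
          simpa [sG, map_mul] using this
        simp only [mul_assoc] at h1 h2
        refine Tri.ext ?_ ?_ <;>
          simp [map_mul, FreeMonoid.lift_eval_of, genD, h1, h2, mul_assoc]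
    | comm_ss i j hij =>
        have h1 : sG (n := m) i * sG j = sG j * sG i := by
          have := SB.sound (SBRel.comm_ss i j hij)
          simpa [sG, map_mul] using this
        refine Tri.ext ?_ ?_ <;>
          simp [map_mul, FreeMonoid.lift_eval_of, genD, h1]
    | comm_st i j hij =>
        have h1 : sG (n := m) i * tauG j = tauG j * sG i := by
          have := SB.sound (SBRel.comm_st i j hij)
          simpa [sG, tauG, map_mul] using this
        have h2 : sG (n := m) i * sG j = sG j * sG i := by
          have := SB.sound (SBRel.comm_ss i j hij)
          simpa [sG, map_mul] using this
        refine Tri.ext ?_ ?_ <;>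
          simp [map_mul, FreeMonoid.lift_eval_of, genD, h1, h2, mul_assoc]
    | comm_tt i j hij =>
        have h1 : tauG (n := m) i * tauG j = tauG j * tauG i := by
          have := SB.sound (SBRel.comm_tt i j hij)
          simpa [tauG, map_mul] using this
        have h2 : sG (n := m) i * tauG j = tauG j * sG i := by
          have := SB.sound (SBRel.comm_st i j hij)
          simpa [sG, tauG, map_mul] using this
        have h3 : sG (n := m) j * tauG i = tauG i * sG j := by
          have := SB.sound (SBRel.comm_st j i (Or.symm hij))
          simpa [sG, tauG, map_mul] using this
        refine Tri.ext ?_ ?_ <;>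
          simp [map_mul, FreeMonoid.lift_eval_of, genD, h1, h2, h3, mul_assoc, add_comm])

theorem DerHom_mk (w : FreeMonoid (SBGen m)) :
    DerHom (SB.mk w) = FreeMonoid.lift genD w := SB.lift_mk _ _ _

theorem DerHom_fst (β : SB m) : (DerHom β).fst = β := by
  obtain ⟨w, rfl⟩ := Con.mk'_surjective (c := SBcon m) β
  show (DerHom (SB.mk w)).fst = SB.mk w
  rw [DerHom_mk]
  induction w using FreeMonoid.recOn with
  | one => simp
  | of_mul x xs ih =>
      rw [map_mul, mk_of_mul, tri_mul_fst, ih]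
      congr 1
      cases x <;> rfl

/-- The derivation `SB m → Lqz[SB m]`. -/
def der (β : SB m) : MonoidAlgebra Lqz (SB m) := (DerHom β).snd

theorem DerHom_eq (β : SB m) : DerHom β = (⟨β, der β⟩ : Tri m) := by
  refine Tri.ext ?_ rfl
  exact DerHom_fst β

theorem der_mul (a b : SB m) :
    der (a * b) = der a * MonoidAlgebra.of Lqz (SB m) b
      + MonoidAlgebra.of Lqz (SB m) a * der b := by
  have : DerHom (a * b) = DerHom a * DerHom b := map_mul _ _ _
  have h2 := congrArg Tri.snd this
  rw [tri_mul_snd, DerHom_fst, DerHom_fst] at h2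
  exact h2

theorem der_one : der (1 : SB m) = 0 := by
  have := congrArg Tri.snd (map_one (DerHom (m := m)))
  simpa [der] using this

theorem der_tauG (i : Fin (m - 1)) : der (tauG i) = MonoidAlgebra.of Lqz (SB m) (sG i) := by
  have : DerHom (tauG i) = genD (.tau i) := DerHom_mk _
  have h2 := congrArg Tri.snd this
  simpa [der, genD] using h2

theorem der_posG (i : Fin (m - 1)) : der (SB.mk (FreeMonoid.of (SBGen.pos (n := m) i))) = 0 := by
  have : DerHom (SB.mk (FreeMonoid.of (SBGen.pos (n := m) i))) = genD (.pos i) := DerHom_mk _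
  have h2 := congrArg Tri.snd this
  simpa [der, genD] using h2

theorem der_negG (i : Fin (m - 1)) : der (SB.mk (FreeMonoid.of (SBGen.neg (n := m) i))) = 0 := by
  have : DerHom (SB.mk (FreeMonoid.of (SBGen.neg (n := m) i))) = genD (.neg i) := DerHom_mk _
  have h2 := congrArg Tri.snd this
  simpa [der, genD] using h2

theorem degM_mk (w : FreeMonoid (SBGen m)) :
    degM (SB.mk w) = FreeMonoid.lift degGen w := SB.lift_mk _ _ _

theorem der_eq_zero {β : SB m} (h : degM β = Multiplicative.ofAdd 0) : der β = 0 := by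
  obtain ⟨w, rfl⟩ := Con.mk'_surjective (c := SBcon m) β
  rw [show Con.mk' (SBcon m) w = SB.mk w from rfl] at h ⊢
  rw [degM_mk] at h
  induction w using FreeMonoid.recOn with
  | one => simpa using der_one
  | of_mul x xs ih =>
      rw [map_mul] at h
      rw [mk_of_mul, der_mul]
      cases x with
      | pos i =>
          have hxs : FreeMonoid.lift (degGen (n := m)) xs = Multiplicative.ofAdd 0 := by
            simpa [FreeMonoid.lift_eval_of, degGen] using h
          rw [der_posG, ih hxs]; simp
      | neg i =>
          have hxs : FreeMonoid.lift (degGen (n := m)) xs = Multiplicative.ofAdd 0 := by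
            simpa [FreeMonoid.lift_eval_of, degGen] using h
          rw [der_negG, ih hxs]; simp
      | tau i =>
          exfalso
          rw [FreeMonoid.lift_eval_of] at h
          have h' := congrArg Multiplicative.toAdd h
          rw [toAdd_mul] at h'
          simp [degGen] at h'

theorem degM_tauG (i : Fin (m - 1)) : degM (tauG i) = Multiplicative.ofAdd 1 := degM_mk _

theorem degM_sG (i : Fin (m - 1)) : degM (sG i) = Multiplicative.ofAdd 0 := degM_mk _

theorem degM_sInvG (i : Fin (m - 1)) : degM (sInvG i) = Multiplicative.ofAdd 0 := degM_mk _

theorem sbWord_zero (α : Fin 1 → SB m) (idx : Fin 0 → Fin (m - 1)) :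
    sbWord α idx = α 0 := by simp [sbWord]

theorem sbWord_succ {d : ℕ} (α : Fin (d + 2) → SB m) (idx : Fin (d + 1) → Fin (m - 1)) :
    sbWord α idx = α 0 * (tauG (idx 0) * sbWord (α ∘ Fin.succ) (idx ∘ Fin.succ)) := by
  unfold sbWord
  rw [List.ofFn_succ]
  simp [List.prod_cons, mul_assoc, Function.comp]

theorem sbWordRepl_zero {d : ℕ} (α : Fin (d + 2) → SB m) (idx : Fin (d + 1) → Fin (m - 1))
    (x : SB m) :
    sbWordRepl α idx 0 x = α 0 * (x * sbWord (α ∘ Fin.succ) (idx ∘ Fin.succ)) := by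
  unfold sbWordRepl sbWord
  rw [List.ofFn_succ]
  simp [List.prod_cons, mul_assoc, Function.comp, Fin.succ_ne_zero]

theorem sbWordRepl_succ {d : ℕ} (α : Fin (d + 2) → SB m) (idx : Fin (d + 1) → Fin (m - 1))
    (k : Fin d) (x : SB m) :
    sbWordRepl α idx k.succ x
      = α 0 * (tauG (idx 0) * sbWordRepl (α ∘ Fin.succ) (idx ∘ Fin.succ) k x) := by
  have h0 : ((0 : Fin (d + 1)) = k.succ) = False := by
    simp [eq_comm, Fin.succ_ne_zero]
  unfold sbWordRepl
  rw [List.ofFn_succ]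
  simp [List.prod_cons, mul_assoc, Function.comp, h0, Fin.succ_inj]

theorem degM_sbWord {d : ℕ} (α : Fin (d + 1) → SB m) (idx : Fin d → Fin (m - 1))
    (hα : ∀ j, degM (α j) = Multiplicative.ofAdd 0) :
    degM (sbWord α idx) = Multiplicative.ofAdd d := by
  induction d with
  | zero => rw [sbWord_zero]; exact hα 0
  | succ d ih =>
      rw [sbWord_succ, map_mul, map_mul, hα 0, degM_tauG,
        ih (α ∘ Fin.succ) (idx ∘ Fin.succ) (fun j => hα j.succ)]
      simp only [← ofAdd_add]
      congr 1
      omega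


theorem der_sbWord {d : ℕ} (α : Fin (d + 1) → SB m) (idx : Fin d → Fin (m - 1))
    (hα : ∀ j, degM (α j) = Multiplicative.ofAdd 0) :
    der (sbWord α idx)
      = ∑ k : Fin d, MonoidAlgebra.of Lqz (SB m) (sbWordRepl α idx k (sG (idx k))) := by
  induction d with
  | zero => rw [sbWord_zero]; simp [der_eq_zero (hα 0)]
  | succ d ih =>
      rw [sbWord_succ, der_mul, der_mul, der_tauG, der_eq_zero (hα 0),
        ih (α ∘ Fin.succ) (idx ∘ Fin.succ) (fun j => hα j.succ), Fin.sum_univ_succ]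
      simp only [sbWordRepl_zero, sbWordRepl_succ, map_mul, zero_mul, zero_add, mul_add,
        Finset.mul_sum, mul_assoc, Function.comp_apply, Fin.cons_zero, Fin.cons_succ]

theorem sbWord_update {d : ℕ} (α : Fin (d + 1) → SB m) (idx : Fin d → Fin (m - 1))
    (x : SB m) :
    sbWord (Function.update α 0 (x * α 0)) idx = x * sbWord α idx := by
  unfold sbWord
  simp [Function.update_self, Function.update_of_ne (Fin.succ_ne_zero _), mul_assoc]

theorem sbWord_cons {d : ℕ} (α : Fin (d + 1) → SB m) (idx : Fin d → Fin (m - 1))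
    (i : Fin (m - 1)) :
    sbWord (Fin.cons 1 α) (Fin.cons i idx) = tauG i * sbWord α idx := by
  unfold sbWord
  rw [List.ofFn_succ]
  simp [List.prod_cons, mul_assoc, Fin.cons_succ, Fin.cons_zero]

theorem exists_expr (w : FreeMonoid (SBGen m)) :
    ∀ d : ℕ, FreeMonoid.lift degGen w = Multiplicative.ofAdd d →
    ∃ (α : Fin (d + 1) → SB m) (idx : Fin d → Fin (m - 1)),
      (∀ j, degM (α j) = Multiplicative.ofAdd 0) ∧ sbWord α idx = SB.mk w := by
  induction w using FreeMonoid.recOn with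
  | one =>
      intro d hd
      have hd0 : d = 0 := by
        have := congrArg Multiplicative.toAdd hd
        simpa using this.symm
      subst hd0
      refine ⟨fun _ => 1, Fin.elim0, fun j => by simp, ?_⟩
      rw [sbWord_zero, map_one]
  | of_mul x xs ih =>
      intro d hd
      rw [map_mul, FreeMonoid.lift_eval_of] at hd
      cases x with
      | pos i =>
          rw [show degGen (SBGen.pos (n := m) i) = 1 from rfl, one_mul] at hd
          obtain ⟨α, idx, hα, hw⟩ := ih d hd
          refine ⟨Function.update α 0 (sG i * α 0), idx, ?_, ?_⟩
          · intro j
            rcases eq_or_ne j 0 with rfl | hj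
            · rw [Function.update_self, map_mul, hα 0, degM_sG]; rfl
            · rw [Function.update_of_ne hj]; exact hα j
          · rw [sbWord_update, hw, mk_of_mul]; rfl
      | neg i =>
          rw [show degGen (SBGen.neg (n := m) i) = 1 from rfl, one_mul] at hd
          obtain ⟨α, idx, hα, hw⟩ := ih d hd
          refine ⟨Function.update α 0 (sInvG i * α 0), idx, ?_, ?_⟩
          · intro j
            rcases eq_or_ne j 0 with rfl | hj
            · rw [Function.update_self, map_mul, hα 0, degM_sInvG]; rfl
            · rw [Function.update_of_ne hj]; exact hα j
          · rw [sbWord_update, hw, mk_of_mul]; rfl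
      | tau i =>
          obtain ⟨α, idx, hα, hw⟩ :=
            ih (Multiplicative.toAdd (FreeMonoid.lift degGen xs)) rfl
          have hd' : d = Multiplicative.toAdd (FreeMonoid.lift (degGen (n := m)) xs) + 1 := by
            have := congrArg Multiplicative.toAdd hd
            rw [toAdd_mul] at this
            simp only [show Multiplicative.toAdd (degGen (SBGen.tau (n := m) i)) = 1 from rfl,
              toAdd_ofAdd] at this
            omega
          subst hd'
          refine ⟨Fin.cons 1 α, Fin.cons i idx, ?_, ?_⟩
          · intro j
            refine Fin.cases ?_ (fun j => ?_) j
            · simp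
            · rw [Fin.cons_succ]; exact hα j
          · rw [sbWord_cons, hw, mk_of_mul]; rfl

theorem exists_expr' (d : ℕ) (β : SB m) (h : degM β = Multiplicative.ofAdd d) :
    ∃ (α : Fin (d + 1) → SB m) (idx : Fin d → Fin (m - 1)),
      (∀ j, degM (α j) = Multiplicative.ofAdd 0) ∧ sbWord α idx = β := by
  obtain ⟨w, rfl⟩ := Con.mk'_surjective (c := SBcon m) β
  exact exists_expr w d (by rw [← degM_mk]; exact h)

end F1Aux
/-- For every `n ≥ 2` and `d ≥ 1` there is a unique `ℂ(q,z)`-linear map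
`f_{n,1} : ℂ(q,z)[S_dB_n] → ℂ(q,z)[S_{d-1}B_n]` such that for every `β ∈ S_dB_n` and every
expression `β = α_0 τ_{i_1} α_1 ⋯ τ_{i_d} α_d` with `α_0, …, α_d ∈ B_n`, `f_{n,1}(β)` is the
sum of the `d` words obtained by replacing one letter `τ_{i_k}` by `σ_{i_k}`. In particular
this sum does not depend on the chosen expression, and every `β ∈ S_dB_n` admits such an
expression. -/
theorem exists_unique_f1 (m : ℕ) (hm : 2 ≤ m) (d : ℕ) (hd : 1 ≤ d) :
    (∃! f : FreeSd m d →ₗ[Lqz] FreeSd m (d - 1),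
      ∀ (α : Fin (d + 1) → SB m) (idx : Fin d → Fin (m - 1)),
        (∀ j, degM (α j) = Multiplicative.ofAdd 0) →
        f (freeElem d (sbWord α idx)) =
          ∑ k : Fin d, freeElem (d - 1) (sbWordRepl α idx k (sG (idx k)))) ∧
    (∀ β : SB m, degM β = Multiplicative.ofAdd d →
      ∃ (α : Fin (d + 1) → SB m) (idx : Fin d → Fin (m - 1)),
        (∀ j, degM (α j) = Multiplicative.ofAdd 0) ∧ sbWord α idx = β) := by
  classical
  set g : MonoidAlgebra Lqz (SB m) →ₗ[Lqz] FreeSd m (d - 1) :=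
    Finsupp.lift (FreeSd m (d - 1)) Lqz (SB m) (fun β => freeElem (d - 1) β) ∘ₗ
      (MonoidAlgebra.coeffLinearEquiv Lqz).toLinearMap with hgdef
  set f : FreeSd m d →ₗ[Lqz] FreeSd m (d - 1) :=
    Finsupp.lift (FreeSd m (d - 1)) Lqz {β : SB m // degM β = Multiplicative.ofAdd d}
      (fun s => g (F1Aux.der s.1)) with hfdef
  have hg1 : ∀ β : SB m, g (MonoidAlgebra.of Lqz (SB m) β) = freeElem (d - 1) β := by
    intro β
    rw [hgdef]
    rw [LinearMap.comp_apply]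
    erw [show ((MonoidAlgebra.coeffLinearEquiv Lqz).toLinearMap (MonoidAlgebra.of Lqz (SB m) β)
      : SB m →₀ Lqz) = Finsupp.single β 1 from rfl]
    erw [Finsupp.lift_apply]
    rw [Finsupp.sum_single_index (by simp), one_smul]
  have hf1 : ∀ s : {β : SB m // degM β = Multiplicative.ofAdd d},
      f (Finsupp.single s 1) = g (F1Aux.der s.1) := by
    intro s
    rw [hfdef]
    erw [Finsupp.lift_apply]
    rw [Finsupp.sum_single_index (by simp), one_smul]
  have key : ∀ (α : Fin (d + 1) → SB m) (idx : Fin d → Fin (m - 1)),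
      (∀ j, degM (α j) = Multiplicative.ofAdd 0) →
      f (freeElem d (sbWord α idx)) =
        ∑ k : Fin d, freeElem (d - 1) (sbWordRepl α idx k (sG (idx k))) := by
    intro α idx hα
    have hdeg := F1Aux.degM_sbWord α idx hα
    rw [show freeElem d (sbWord α idx) = Finsupp.single
        (⟨sbWord α idx, hdeg⟩ : {β : SB m // degM β = Multiplicative.ofAdd d}) 1 by
      rw [freeElem, dif_pos hdeg]]
    rw [hf1, F1Aux.der_sbWord α idx hα, map_sum]
    exact Finset.sum_congr rfl fun k _ => hg1 _
  refine ⟨⟨f, key, ?_⟩, fun β hβ => F1Aux.exists_expr' d β hβ⟩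
  intro f' hf'
  refine Finsupp.lhom_ext' fun s => LinearMap.ext_ring ?_
  obtain ⟨β, hβ⟩ := s
  obtain ⟨α, idx, hα, hword⟩ := F1Aux.exists_expr' d β hβ
  have h1 := hf' α idx hα
  have h2 := key α idx hα
  rw [hword] at h1 h2
  have hsingle : freeElem d β = Finsupp.single
      (⟨β, hβ⟩ : {β : SB m // degM β = Multiplicative.ofAdd d}) 1 := by
    rw [freeElem, dif_pos hβ]
  rw [hsingle] at h1 h2
  simp only [LinearMap.comp_apply]
  exact h1.trans h2.symm
end
end SingularHOMFLYPT
end
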